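/- arXiv:2502.21204 — 3 statements merged into one kernel-verified Lean document; each statement's English description precedes it below -/
import Mathlib

section
/- Let T = T_1 *_{e1,e2} T_2 be a gluing of trees along leaf edges e1 = {u1,k1}, e2 = {u2,k2}, and let π_i : (P_{T_i} ∨̂ {0}) → Δ_3 be gluing integral projections, i.e., affine maps with π_1(0) = (0,0,1), π_2(0) = (1,0,0), π_1(c^{i↔j}) = (1,0,0) if e1 ∉ i↔j and (0,1,0) if e1 ∈ i↔j, and π_2(c^{i↔j}) = (0,1,0) if e2 ∈ i↔j and (0,0,1) otherwise. Then P_T is affinely isomorphic to the toric fiber product (P_{T_1} ∨̂ {0}) ×_{Δ_3} (P_{T_2} ∨̂ {0}). -/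
open Classical SimpleGraph

noncomputable section

variable {V : Type*}

/-- A leaf: a vertex with exactly one neighbor. -/
def IsLeaf (G : SimpleGraph V) (v : V) : Prop := ∃! w, G.Adj v w

/-- `e` is an edge on the (unique, for trees) path between `i` and `j`. -/
def onPath (G : SimpleGraph V) (i j : V) (e : Sym2 V) : Prop :=
  ∃ p : G.Walk i j, p.IsPath ∧ e ∈ p.edges

/-- The edge indicator vector `c^{i↔j}` of the path between `i` and `j`. -/
def pathVec (G : SimpleGraph V) (i j : V) : Sym2 V → ℝ :=
  fun e => if onPath G i j e then 1 else 0

/-- The path polytope `P_T`: the convex hull of the indicator vectors of the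
paths between pairs of distinct leaves. -/
def pathPolytope (G : SimpleGraph V) : Set (Sym2 V → ℝ) :=
  convexHull ℝ {x | ∃ i j : V, i ≠ j ∧ IsLeaf G i ∧ IsLeaf G j ∧ x = pathVec G i j}

/-- `E_leaf(T)`: edges incident to at least one leaf. -/
def leafEdges (G : SimpleGraph V) : Set (Sym2 V) :=
  {e | e ∈ G.edgeSet ∧ ∃ v ∈ e, IsLeaf G v}

/-- Vertex set of the gluing of two graphs along the leaves `k1`, `k2`. -/
def GlueV (V1 V2 : Type) (k1 : V1) (k2 : V2) : Type :=
  {x : V1 ⊕ V2 // x ≠ Sum.inl k1 ∧ x ≠ Sum.inr k2}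

attribute [reducible] GlueV

def glueAdj {V1 V2 : Type} (G1 : SimpleGraph V1) (G2 : SimpleGraph V2) (v1 : V1) (v2 : V2) :
    V1 ⊕ V2 → V1 ⊕ V2 → Prop
  | Sum.inl x, Sum.inl y => G1.Adj x y
  | Sum.inr x, Sum.inr y => G2.Adj x y
  | Sum.inl x, Sum.inr y => x = v1 ∧ y = v2
  | Sum.inr x, Sum.inl y => x = v2 ∧ y = v1

/-- The gluing `T1 *_{e1,e2} T2` along the leaf edges `e1 = {v1,k1}`, `e2 = {v2,k2}`:
delete the leaves `k1`, `k2` and add the edge `{v1,v2}`. -/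
def glueGraph {V1 V2 : Type} (G1 : SimpleGraph V1) (G2 : SimpleGraph V2)
    (v1 k1 : V1) (v2 k2 : V2) : SimpleGraph (GlueV V1 V2 k1 k2) where
  Adj a b := glueAdj G1 G2 v1 v2 a.1 b.1
  symm := by
    constructor
    rintro ⟨(x|x), _⟩ ⟨(y|y), _⟩ h <;> simp only [glueAdj] at * <;>
      first | exact h.symm | tauto
  loopless := by
    constructor
    rintro ⟨(x|x), _⟩ h <;> simp only [glueAdj] at h <;>
      first | exact G1.irrefl h | exact G2.irrefl h

/-- The toric fiber product of `A` and `B` along the affine maps `π1, π2`: the convex hull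
of the pairs of vertices (extreme points) of `A` and `B` with matching images. -/
def tfp {E1 E2 F : Type*} [AddCommGroup E1] [Module ℝ E1] [AddCommGroup E2] [Module ℝ E2]
    [AddCommGroup F] [Module ℝ F]
    (π1 : E1 →ᵃ[ℝ] F) (π2 : E2 →ᵃ[ℝ] F) (A : Set E1) (B : Set E2) : Set (E1 × E2) :=
  convexHull ℝ {p : E1 × E2 |
    p.1 ∈ Set.extremePoints ℝ A ∧ p.2 ∈ Set.extremePoints ℝ B ∧ π1 p.1 = π2 p.2}

section Generic

variable {G : SimpleGraph V} {k v : V}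

lemma IsLeaf.nbr_eq (hk : IsLeaf G k) (hv : G.Adj v k) {w : V} (hw : G.Adj k w) : w = v :=
  hk.unique hw hv.symm

/-- A leaf that is not an endpoint is not on a path. -/
lemma leaf_not_mem_support (hk : IsLeaf G k) (hv : G.Adj v k) :
    ∀ {i j : V} (p : G.Walk i j), p.IsPath → i ≠ k → j ≠ k → k ∉ p.support := by
  intro i j p
  induction p with
  | nil => intro _ hi _; simpa using Ne.symm hi
  | @cons u c w h q ih =>
    intro hp hi hj
    rw [Walk.support_cons, List.mem_cons]
    push_neg
    refine ⟨Ne.symm hi, ?_⟩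
    rcases Walk.cons_isPath_iff h q |>.1 hp with ⟨hq, hu⟩
    by_cases hc : c = k
    · subst hc
      cases q with
      | nil => exact absurd rfl hj
      | @cons _ d _ h' q' =>
        exfalso
        have hd : d = v := hk.nbr_eq hv h'
        have hu2 : u = v := hk.nbr_eq hv h.symm
        apply hu
        rw [Walk.support_cons, List.mem_cons]
        right
        rw [hu2, ← hd]
        exact q'.start_mem_support
    · exact ih hq hc hj

lemma mem_support_of_mem_edge {i j : V} (p : G.Walk i j) {e : Sym2 V} (he : e ∈ p.edges)
    (hx : k ∈ e) : k ∈ p.support := by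
  induction e using Sym2.ind with
  | _ x y =>
    rcases Sym2.mem_iff.1 hx with rfl | rfl
    · exact p.fst_mem_support_of_mem_edges he
    · exact p.snd_mem_support_of_mem_edges he

/-- Any nontrivial path from a leaf contains the leaf edge. -/
lemma leaf_edge_mem_edges (hk : IsLeaf G k) (hv : G.Adj v k) {i : V} (p : G.Walk k i)
    (hi : i ≠ k) : s(v, k) ∈ p.edges := by
  cases p with
  | nil => exact absurd rfl hi
  | @cons _ d _ h' q' =>
    have hd : d = v := hk.nbr_eq hv h'
    rw [Walk.edges_cons, List.mem_cons]
    left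
    rw [hd, Sym2.eq_swap]

lemma onPath_comm {G : SimpleGraph V} {i j : V} {e : Sym2 V} :
    onPath G i j e ↔ onPath G j i e := by
  constructor <;> rintro ⟨p, hp, he⟩ <;>
    exact ⟨p.reverse, p.isPath_reverse_iff.2 hp, by simpa using he⟩

lemma pathVec_comm {G : SimpleGraph V} (i j : V) : pathVec G i j = pathVec G j i := by
  funext e; simp only [pathVec]
  exact if_congr onPath_comm rfl rfl

lemma onPath_tree_iff {G : SimpleGraph V} (hG : G.IsTree) {i j : V} {p : G.Walk i j}
    (hp : p.IsPath) {e : Sym2 V} : onPath G i j e ↔ e ∈ p.edges := by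
  constructor
  · rintro ⟨q, hq, he⟩
    rwa [(hG.existsUnique_path i j).unique hq hp] at he
  · exact fun he => ⟨p, hp, he⟩

lemma pathVec_zero_one {G : SimpleGraph V} (i j : V) (e : Sym2 V) :
    pathVec G i j e = 0 ∨ pathVec G i j e = 1 := by
  unfold pathVec; split <;> simp

end Generic

/-- 0/1 points of a subset of the cube are extreme. -/
lemma mem_extremePoints_of_zero_one {ι : Type*} {A : Set (ι → ℝ)}
    (hA : ∀ f ∈ A, ∀ e, 0 ≤ f e ∧ f e ≤ 1) {x : ι → ℝ} (hx : x ∈ A)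
    (hx01 : ∀ e, x e = 0 ∨ x e = 1) : x ∈ Set.extremePoints ℝ A := by
  refine ⟨hx, fun y hy z hz hseg => ?_⟩
  obtain ⟨a, b, ha, hb, hab, habx⟩ := hseg
  have key : y = x ∧ z = x := by
    have hyz : ∀ e, y e = x e ∧ z e = x e := by
      intro e
      have h1 : a * y e + b * z e = x e := congrFun habx e
      obtain ⟨hy0, hy1⟩ := hA y hy e
      obtain ⟨hz0, hz1⟩ := hA z hz e
      rcases hx01 e with h | h <;> rw [h] at h1 ⊢ <;> constructor <;> nlinarith
    exact ⟨funext fun e => (hyz e).1, funext fun e => (hyz e).2⟩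
  exact key.1

/-- Split off the final leaf edge from a path ending at a leaf. -/
lemma path_to_leaf_decomp {G : SimpleGraph V} {v : V} :
    ∀ {i k : V} (p : G.Walk i k), IsLeaf G k → G.Adj v k → p.IsPath → i ≠ k →
    ∃ r : G.Walk i v, r.IsPath ∧ k ∉ r.support ∧ (∀ z ∈ r.support, z ∈ p.support) ∧
      (∀ e, e ∈ p.edges ↔ e = s(v, k) ∨ e ∈ r.edges) := by
  intro i k p
  induction p with
  | nil => intro _ _ _ hi; exact absurd rfl hi
  | @cons u c w h p ih =>
    intro hk hv hp hu
    obtain ⟨hp', hup⟩ := (Walk.cons_isPath_iff h p).1 hp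
    by_cases hc : c = w
    · subst hc
      have hnil : p = Walk.nil := Walk.isPath_iff_eq_nil.1 hp'
      subst hnil
      have huv : u = v := hk.nbr_eq hv h.symm
      refine ⟨(Walk.nil : G.Walk u u).copy rfl huv, by simp, ?_, ?_, ?_⟩
      · rw [Walk.support_copy, Walk.support_nil]
        simpa using Ne.symm hu
      · intro z hz
        rw [Walk.support_copy, Walk.support_nil, List.mem_singleton] at hz
        rw [hz, Walk.support_cons]
        exact List.mem_cons_self
      · intro e
        rw [Walk.edges_cons, Walk.edges_nil, Walk.edges_copy, Walk.edges_nil]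
        simp only [List.mem_singleton, List.not_mem_nil, or_false]
        constructor
        · intro he; rw [he, huv]
        · intro he; rw [he, huv]
    · obtain ⟨r, hr, hkr, hrsub, hre⟩ := ih hk hv hp' hc
      refine ⟨Walk.cons h r, ?_, ?_, ?_, ?_⟩
      · rw [Walk.cons_isPath_iff]
        exact ⟨hr, fun hmem => hup (hrsub u hmem)⟩
      · rw [Walk.support_cons, List.mem_cons]
        push_neg
        exact ⟨Ne.symm hu, hkr⟩
      · intro z hz
        rw [Walk.support_cons, List.mem_cons] at hz ⊢
        rcases hz with rfl | hz
        · left; rfl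
        · right; exact hrsub z hz
      · intro e
        rw [Walk.edges_cons, Walk.edges_cons, List.mem_cons, List.mem_cons]
        rw [hre e]
        tauto

section Glue

variable {V1 V2 : Type} {k1 v1 : V1} {k2 v2 : V2}

def mkL (x : V1) (hx : x ≠ k1) : GlueV V1 V2 k1 k2 :=
  ⟨Sum.inl x, by simpa using hx, by simp⟩

def mkR (y : V2) (hy : y ≠ k2) : GlueV V1 V2 k1 k2 :=
  ⟨Sum.inr y, by simp, by simpa using hy⟩

lemma mkL_injective {x y : V1} {hx hy} :
    (mkL x hx : GlueV V1 V2 k1 k2) = mkL y hy ↔ x = y := by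
  simp [mkL, GlueV, Subtype.mk.injEq]

lemma mkR_injective {x y : V2} {hx hy} :
    (mkR x hx : GlueV V1 V2 k1 k2) = mkR y hy ↔ x = y := by
  simp [mkR, GlueV, Subtype.mk.injEq]

def j1 (hne : v1 ≠ k1) : V1 → GlueV V1 V2 k1 k2 := fun x =>
  if h : x = k1 then mkL v1 hne else mkL x h

def j2 (hne : v2 ≠ k2) : V2 → GlueV V1 V2 k1 k2 := fun y =>
  if h : y = k2 then mkR v2 hne else mkR y h

lemma j1_apply (hne : v1 ≠ k1) {x : V1} (hx : x ≠ k1) :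
    (j1 hne x : GlueV V1 V2 k1 k2) = mkL x hx := by simp [j1, hx]

lemma j2_apply (hne : v2 ≠ k2) {y : V2} (hy : y ≠ k2) :
    (j2 hne y : GlueV V1 V2 k1 k2) = mkR y hy := by simp [j2, hy]

lemma j1_form (hne : v1 ≠ k1) (x : V1) :
    ∃ u : V1, ∃ hu : u ≠ k1, (j1 hne x : GlueV V1 V2 k1 k2) = mkL u hu := by
  unfold j1; split
  · exact ⟨v1, hne, rfl⟩
  · exact ⟨x, ‹_›, rfl⟩

lemma j2_form (hne : v2 ≠ k2) (y : V2) :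
    ∃ u : V2, ∃ hu : u ≠ k2, (j2 hne y : GlueV V1 V2 k1 k2) = mkR u hu := by
  unfold j2; split
  · exact ⟨v2, hne, rfl⟩
  · exact ⟨y, ‹_›, rfl⟩

section GlueWalks

variable {G1 : SimpleGraph V1} {G2 : SimpleGraph V2}

lemma glue_adj_LL {a b : V1} {ha hb} :
    (glueGraph G1 G2 v1 k1 v2 k2).Adj (mkL a ha) (mkL b hb) ↔ G1.Adj a b := Iff.rfl

lemma glue_adj_RR {a b : V2} {ha hb} :
    (glueGraph G1 G2 v1 k1 v2 k2).Adj (mkR a ha) (mkR b hb) ↔ G2.Adj a b := Iff.rfl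

lemma glue_adj_LR {a : V1} {b : V2} {ha hb} :
    (glueGraph G1 G2 v1 k1 v2 k2).Adj (mkL a ha) (mkR b hb) ↔ (a = v1 ∧ b = v2) := Iff.rfl

/-- Lift a walk of `G1` avoiding `k1` to the glued graph. -/
lemma liftWalk1 (hne : v1 ≠ k1) :
    ∀ {a b : V1} (p : G1.Walk a b) (ha : a ≠ k1) (hb : b ≠ k1), k1 ∉ p.support →
    ∃ q : (glueGraph G1 G2 v1 k1 v2 k2).Walk (mkL a ha) (mkL b hb),
      q.support = p.support.map (j1 hne) ∧ q.edges = p.edges.map (Sym2.map (j1 hne)) := by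
  intro a b p
  induction p with
  | nil =>
    intro ha _ _
    exact ⟨Walk.nil, by simp [j1_apply hne ha], by simp⟩
  | @cons u c w h p ih =>
    intro ha hb hk
    have hc : c ≠ k1 := fun h' => hk (by
      rw [Walk.support_cons]
      exact List.mem_cons_of_mem _ (h' ▸ p.start_mem_support))
    have hk' : k1 ∉ p.support := fun hm => hk (by
      rw [Walk.support_cons]; exact List.mem_cons_of_mem _ hm)
    obtain ⟨q, hqs, hqe⟩ := ih hc hb hk'
    refine ⟨Walk.cons (glue_adj_LL.2 h) q, ?_, ?_⟩
    · rw [Walk.support_cons, Walk.support_cons, hqs, List.map_cons, j1_apply hne ha]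
    · rw [Walk.edges_cons, Walk.edges_cons, hqe, List.map_cons, Sym2.map_pair_eq,
        j1_apply hne ha, j1_apply hne hc]

/-- Lift a walk of `G2` avoiding `k2` to the glued graph. -/
lemma liftWalk2 (hne : v2 ≠ k2) :
    ∀ {a b : V2} (p : G2.Walk a b) (ha : a ≠ k2) (hb : b ≠ k2), k2 ∉ p.support →
    ∃ q : (glueGraph G1 G2 v1 k1 v2 k2).Walk (mkR a ha) (mkR b hb),
      q.support = p.support.map (j2 hne) ∧ q.edges = p.edges.map (Sym2.map (j2 hne)) := by
  intro a b p
  induction p with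
  | nil =>
    intro ha _ _
    exact ⟨Walk.nil, by simp [j2_apply hne ha], by simp⟩
  | @cons u c w h p ih =>
    intro ha hb hk
    have hc : c ≠ k2 := fun h' => hk (by
      rw [Walk.support_cons]
      exact List.mem_cons_of_mem _ (h' ▸ p.start_mem_support))
    have hk' : k2 ∉ p.support := fun hm => hk (by
      rw [Walk.support_cons]; exact List.mem_cons_of_mem _ hm)
    obtain ⟨q, hqs, hqe⟩ := ih hc hb hk'
    refine ⟨Walk.cons (glue_adj_RR.2 h) q, ?_, ?_⟩
    · rw [Walk.support_cons, Walk.support_cons, hqs, List.map_cons, j2_apply hne ha]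
    · rw [Walk.edges_cons, Walk.edges_cons, hqe, List.map_cons, Sym2.map_pair_eq,
        j2_apply hne ha, j2_apply hne hc]

/-- Any walk from the right part to the left part passes through `mkL v1`. -/
lemma gatewayL (hne : v1 ≠ k1) :
    ∀ {A B : GlueV V1 V2 k1 k2} (q : (glueGraph G1 G2 v1 k1 v2 k2).Walk A B),
      A.1.isLeft = false → B.1.isLeft = true → mkL v1 hne ∈ q.support := by
  intro A B q
  induction q with
  | nil => intro hA hB; exact absurd (hA.symm.trans hB) (by decide)
  | @cons A C B h q ih =>
    intro hA hB
    rw [Walk.support_cons, List.mem_cons]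
    right
    by_cases hC : C.1.isLeft = true
    · obtain ⟨x, pA⟩ := A
      rcases x with x | x
      · simp at hA
      · obtain ⟨y, pC⟩ := C
        rcases y with y | y
        · have h' : x = v2 ∧ y = v1 := h
          have hC1 : (⟨Sum.inl y, pC⟩ : GlueV V1 V2 k1 k2) = mkL v1 hne :=
            Subtype.ext (congrArg Sum.inl h'.2)
          rw [← hC1]
          exact q.start_mem_support
        · simp at hC
    · exact ih (by simpa using hC) hB

/-- Any walk from the left part to the right part passes through `mkR v2`. -/
lemma gatewayR (hne : v2 ≠ k2) :
    ∀ {A B : GlueV V1 V2 k1 k2} (q : (glueGraph G1 G2 v1 k1 v2 k2).Walk A B),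
      A.1.isLeft = true → B.1.isLeft = false → mkR v2 hne ∈ q.support := by
  intro A B q
  induction q with
  | nil => intro hA hB; exact absurd (hA.symm.trans hB) (by decide)
  | @cons A C B h q ih =>
    intro hA hB
    rw [Walk.support_cons, List.mem_cons]
    right
    by_cases hC : C.1.isLeft = true
    · exact ih hC hB
    · obtain ⟨x, pA⟩ := A
      rcases x with x | x
      · obtain ⟨y, pC⟩ := C
        rcases y with y | y
        · simp at hC
        · have h' : x = v1 ∧ y = v2 := h
          have hC1 : (⟨Sum.inr y, pC⟩ : GlueV V1 V2 k1 k2) = mkR v2 hne :=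
            Subtype.ext (congrArg Sum.inr h'.2)
          rw [← hC1]
          exact q.start_mem_support
      · simp at hA

/-- A path between two left vertices stays in the left part. -/
lemma staysLeft :
    ∀ {A B : GlueV V1 V2 k1 k2} (q : (glueGraph G1 G2 v1 k1 v2 k2).Walk A B),
      q.IsPath → A.1.isLeft = true → B.1.isLeft = true →
      ∀ z ∈ q.support, z.1.isLeft = true := by
  intro A B q
  induction q with
  | nil => intro _ hA _ z hz; rw [Walk.support_nil, List.mem_singleton] at hz; rwa [hz]
  | @cons A C B h q ih =>
    intro hp hA hB z hz
    rw [Walk.support_cons, List.mem_cons] at hz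
    rcases hz with rfl | hz
    · exact hA
    · obtain ⟨hq, hAq⟩ := (Walk.cons_isPath_iff h q).1 hp
      by_cases hC : C.1.isLeft = true
      · exact ih hq hC hB z hz
      · exfalso
        obtain ⟨x, pA⟩ := A
        rcases x with x | x
        · obtain ⟨y, pC⟩ := C
          rcases y with y | y
          · simp at hC
          · have h' : x = v1 ∧ y = v2 := h
            have hne : v1 ≠ k1 := by
              intro hh
              exact pA.1 (by rw [h'.1, hh])
            have : mkL v1 hne ∈ q.support := gatewayL hne q (by simp) hB
            apply hAq
            have hAeq : (⟨Sum.inl x, pA⟩ : GlueV V1 V2 k1 k2) = mkL v1 hne :=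
              Subtype.ext (congrArg Sum.inl h'.1)
            rw [hAeq]
            exact this
        · simp at hA

/-- A path between two right vertices stays in the right part. -/
lemma staysRight :
    ∀ {A B : GlueV V1 V2 k1 k2} (q : (glueGraph G1 G2 v1 k1 v2 k2).Walk A B),
      q.IsPath → A.1.isLeft = false → B.1.isLeft = false →
      ∀ z ∈ q.support, z.1.isLeft = false := by
  intro A B q
  induction q with
  | nil => intro _ hA _ z hz; rw [Walk.support_nil, List.mem_singleton] at hz; rwa [hz]
  | @cons A C B h q ih =>
    intro hp hA hB z hz
    rw [Walk.support_cons, List.mem_cons] at hz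
    rcases hz with rfl | hz
    · exact hA
    · obtain ⟨hq, hAq⟩ := (Walk.cons_isPath_iff h q).1 hp
      by_cases hC : C.1.isLeft = false
      · exact ih hq hC hB z hz
      · exfalso
        obtain ⟨x, pA⟩ := A
        rcases x with x | x
        · simp at hA
        · obtain ⟨y, pC⟩ := C
          rcases y with y | y
          · have h' : x = v2 ∧ y = v1 := h
            have hne : v2 ≠ k2 := by
              intro hh
              exact pA.2 (by rw [h'.1, hh])
            have : mkR v2 hne ∈ q.support := gatewayR hne q (by simp) hB
            apply hAq
            have hAeq : (⟨Sum.inr x, pA⟩ : GlueV V1 V2 k1 k2) = mkR v2 hne :=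
              Subtype.ext (congrArg Sum.inr h'.1)
            rw [hAeq]
            exact this
          · simp at hC

/-- Project a left-staying walk down to `G1`. -/
lemma projWalk1 (hne : v1 ≠ k1) :
    ∀ {A B : GlueV V1 V2 k1 k2} (q : (glueGraph G1 G2 v1 k1 v2 k2).Walk A B),
      (∀ z ∈ q.support, z.1.isLeft = true) →
      ∃ (a b : V1) (ha : a ≠ k1) (hb : b ≠ k1) (p : G1.Walk a b),
        A = mkL a ha ∧ B = mkL b hb ∧ k1 ∉ p.support ∧
        q.support = p.support.map (j1 hne) ∧ q.edges = p.edges.map (Sym2.map (j1 hne)) := by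
  intro A0 B0 q
  induction q with
  | @nil A =>
    intro hsup
    obtain ⟨x, pA⟩ := A
    rcases x with x | x
    · have hx : x ≠ k1 := fun hh => pA.1 (by rw [hh])
      refine ⟨x, x, hx, hx, Walk.nil, Subtype.ext rfl, Subtype.ext rfl, by simpa using Ne.symm hx, ?_, by simp⟩
      simp [j1_apply hne hx, mkL]
    · have := hsup _ (Walk.start_mem_support _)
      simp at this
  | @cons A C B h q ih =>
    intro hsup
    have hsup' : ∀ z ∈ q.support, z.1.isLeft = true := fun z hz =>
      hsup z (by rw [Walk.support_cons]; exact List.mem_cons_of_mem _ hz)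
    obtain ⟨c, b, hc, hb, p, hC, hB, hkp, hps, hpe⟩ := ih hsup'
    obtain ⟨x, pA⟩ := A
    rcases x with x | x
    · have hx : x ≠ k1 := fun hh => pA.1 (by rw [hh])
      subst hC
      have h' : G1.Adj x c := h
      refine ⟨x, b, hx, hb, Walk.cons h' p, Subtype.ext rfl, hB, ?_, ?_, ?_⟩
      · rw [Walk.support_cons, List.mem_cons]
        push_neg
        exact ⟨Ne.symm hx, hkp⟩
      · rw [Walk.support_cons, Walk.support_cons, hps, List.map_cons, j1_apply hne hx]
        rfl
      · rw [Walk.edges_cons, Walk.edges_cons, hpe, List.map_cons, Sym2.map_pair_eq,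
          j1_apply hne hx, j1_apply hne hc]
        rfl
    · have := hsup _ (Walk.start_mem_support _)
      simp at this

/-- Project a right-staying walk down to `G2`. -/
lemma projWalk2 (hne : v2 ≠ k2) :
    ∀ {A B : GlueV V1 V2 k1 k2} (q : (glueGraph G1 G2 v1 k1 v2 k2).Walk A B),
      (∀ z ∈ q.support, z.1.isLeft = false) →
      ∃ (a b : V2) (ha : a ≠ k2) (hb : b ≠ k2) (p : G2.Walk a b),
        A = mkR a ha ∧ B = mkR b hb ∧ k2 ∉ p.support ∧
        q.support = p.support.map (j2 hne) ∧ q.edges = p.edges.map (Sym2.map (j2 hne)) := by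
  intro A0 B0 q
  induction q with
  | @nil A =>
    intro hsup
    obtain ⟨x, pA⟩ := A
    rcases x with x | x
    · have := hsup _ (Walk.start_mem_support _)
      simp at this
    · have hx : x ≠ k2 := fun hh => pA.2 (by rw [hh])
      refine ⟨x, x, hx, hx, Walk.nil, Subtype.ext rfl, Subtype.ext rfl, by simpa using Ne.symm hx, ?_, by simp⟩
      simp [j2_apply hne hx, mkR]
  | @cons A C B h q ih =>
    intro hsup
    have hsup' : ∀ z ∈ q.support, z.1.isLeft = false := fun z hz =>
      hsup z (by rw [Walk.support_cons]; exact List.mem_cons_of_mem _ hz)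
    obtain ⟨c, b, hc, hb, p, hC, hB, hkp, hps, hpe⟩ := ih hsup'
    obtain ⟨x, pA⟩ := A
    rcases x with x | x
    · have := hsup _ (Walk.start_mem_support _)
      simp at this
    · have hx : x ≠ k2 := fun hh => pA.2 (by rw [hh])
      subst hC
      have h' : G2.Adj x c := h
      refine ⟨x, b, hx, hb, Walk.cons h' p, Subtype.ext rfl, hB, ?_, ?_, ?_⟩
      · rw [Walk.support_cons, List.mem_cons]
        push_neg
        exact ⟨Ne.symm hx, hkp⟩
      · rw [Walk.support_cons, Walk.support_cons, hps, List.map_cons, j2_apply hne hx]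
        rfl
      · rw [Walk.edges_cons, Walk.edges_cons, hpe, List.map_cons, Sym2.map_pair_eq,
          j2_apply hne hx, j2_apply hne hc]
        rfl

/-- Decompose a glued path from the left part to the right part. -/
lemma decompose (hne1 : v1 ≠ k1) (hne2 : v2 ≠ k2) :
    ∀ {A B : GlueV V1 V2 k1 k2} (q : (glueGraph G1 G2 v1 k1 v2 k2).Walk A B),
      q.IsPath → A.1.isLeft = true → B.1.isLeft = false →
      ∃ (a : V1) (l : V2) (ha : a ≠ k1) (hl : l ≠ k2)
        (p1 : G1.Walk a v1) (p2 : G2.Walk v2 l),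
        A = mkL a ha ∧ B = mkR l hl ∧ k1 ∉ p1.support ∧ k2 ∉ p2.support ∧
        q.support = p1.support.map (j1 hne1) ++ p2.support.map (j2 hne2) ∧
        q.edges = p1.edges.map (Sym2.map (j1 hne1)) ++
          s(mkL v1 hne1, mkR v2 hne2) :: p2.edges.map (Sym2.map (j2 hne2)) := by
  intro A B q
  induction q with
  | nil => intro _ hA hB; exact absurd (hA.symm.trans hB) (by decide)
  | @cons A C B h q ih =>
    intro hp hA hB
    obtain ⟨hq, hAq⟩ := (Walk.cons_isPath_iff h q).1 hp
    obtain ⟨x, pA⟩ := A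
    rcases x with x | x
    swap
    · simp at hA
    have hx : x ≠ k1 := fun hh => pA.1 (by rw [hh])
    by_cases hC : C.1.isLeft = true
    · -- first step stays left
      obtain ⟨a, l, ha, hl, p1, p2, hCeq, hBeq, hk1, hk2, hqs, hqe⟩ := ih hq hC hB
      subst hCeq
      have h' : G1.Adj x a := h
      refine ⟨x, l, hx, hl, Walk.cons h' p1, p2, Subtype.ext rfl, hBeq, ?_, hk2, ?_, ?_⟩
      · rw [Walk.support_cons, List.mem_cons]
        push_neg
        exact ⟨Ne.symm hx, hk1⟩
      · rw [Walk.support_cons, hqs, Walk.support_cons, List.map_cons,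
          j1_apply hne1 hx, List.cons_append]
        rfl
      · rw [Walk.edges_cons, hqe, Walk.edges_cons, List.map_cons, Sym2.map_pair_eq,
          j1_apply hne1 hx, j1_apply hne1 ha, List.cons_append]
        rfl
    · -- first step crosses the bridge
      obtain ⟨y, pC⟩ := C
      rcases y with y | y
      · simp at hC
      have h' : x = v1 ∧ y = v2 := h
      have hrt : ∀ z ∈ q.support, z.1.isLeft = false :=
        staysRight q hq (by simp) hB
      obtain ⟨c, l, hc, hl, p2, hCeq, hBeq, hk2, hqs, hqe⟩ := projWalk2 hne2 q hrt
      have hcv : v2 = c := by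
        have h2 := congrArg Subtype.val hCeq
        simp only [mkR] at h2
        rw [← h'.2]
        exact Sum.inr.inj h2
      subst hcv
      refine ⟨x, l, hx, hl, (Walk.nil : G1.Walk x x).copy rfl h'.1, p2,
        Subtype.ext rfl, hBeq, ?_, hk2, ?_, ?_⟩
      · rw [Walk.support_copy, Walk.support_nil]
        simpa using Ne.symm hx
      · rw [Walk.support_cons, hqs, Walk.support_copy, Walk.support_nil,
          List.map_singleton, j1_apply hne1 hx, List.singleton_append]
        rfl
      · rw [Walk.edges_cons, hqe, Walk.edges_copy, Walk.edges_nil, List.map_nil,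
          List.nil_append]
        congr 1
        rw [Sym2.eq_iff]
        left
        exact ⟨Subtype.ext (congrArg Sum.inl h'.1), Subtype.ext (congrArg Sum.inr h'.2)⟩

end GlueWalks

def pairVal (v1 k1 : V1) (v2 k2 : V2) (p : (Sym2 V1 → ℝ) × (Sym2 V2 → ℝ)) : V1 ⊕ V2 → V1 ⊕ V2 → ℝ
  | Sum.inl x, Sum.inl y => p.1 s(x, y)
  | Sum.inr x, Sum.inr y => p.2 s(x, y)
  | Sum.inl x, Sum.inr y => if x = v1 ∧ y = v2 then (p.1 s(v1, k1) + p.2 s(v2, k2)) / 2 else 0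
  | Sum.inr x, Sum.inl y => if x = v2 ∧ y = v1 then (p.1 s(v1, k1) + p.2 s(v2, k2)) / 2 else 0

lemma pairVal_symm (p : (Sym2 V1 → ℝ) × (Sym2 V2 → ℝ)) (a b : V1 ⊕ V2) :
    pairVal v1 k1 v2 k2 p a b = pairVal v1 k1 v2 k2 p b a := by
  rcases a with x | x <;> rcases b with y | y <;> simp only [pairVal]
  · rw [Sym2.eq_swap]
  · exact if_congr and_comm rfl rfl
  · exact if_congr and_comm rfl rfl
  · rw [Sym2.eq_swap]

def phiFun (v1 k1 : V1) (v2 k2 : V2) (p : (Sym2 V1 → ℝ) × (Sym2 V2 → ℝ)) : Sym2 (GlueV V1 V2 k1 k2) → ℝ :=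
  Sym2.lift ⟨fun a b => pairVal v1 k1 v2 k2 p a.1 b.1, fun a b => pairVal_symm p a.1 b.1⟩

lemma phiFun_mk (p : (Sym2 V1 → ℝ) × (Sym2 V2 → ℝ)) (a b : GlueV V1 V2 k1 k2) :
    phiFun v1 k1 v2 k2 p s(a, b) = pairVal v1 k1 v2 k2 p a.1 b.1 := rfl

def phiLin (v1 k1 : V1) (v2 k2 : V2) : ((Sym2 V1 → ℝ) × (Sym2 V2 → ℝ)) →ₗ[ℝ] (Sym2 (GlueV V1 V2 k1 k2) → ℝ) where
  toFun := phiFun v1 k1 v2 k2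
  map_add' p q := by
    funext e
    induction e using Sym2.ind with
    | _ a b =>
      rcases a with ⟨x | x, hx⟩ <;> rcases b with ⟨y | y, hy⟩ <;>
        simp only [phiFun_mk, pairVal, Prod.fst_add, Prod.snd_add, Pi.add_apply] <;>
        first
          | rfl
          | (split <;> ring)
  map_smul' c p := by
    funext e
    induction e using Sym2.ind with
    | _ a b =>
      rcases a with ⟨x | x, hx⟩ <;> rcases b with ⟨y | y, hy⟩ <;>
        simp only [phiFun_mk, pairVal, Prod.smul_fst, Prod.smul_snd, Pi.smul_apply,
          RingHom.id_apply, smul_eq_mul] <;>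
        first
          | rfl
          | (split <;> ring)


section LeafTransfer

variable {G1 : SimpleGraph V1} {G2 : SimpleGraph V2}

lemma mkL_ne_mkR {x : V1} {y : V2} {hx hy} :
    (mkL x hx : GlueV V1 V2 k1 k2) ≠ mkR y hy := by
  simp [mkL, mkR, GlueV, Subtype.mk.injEq]

lemma isLeaf_mkL (hk1 : IsLeaf G1 k1) (h1 : G1.Adj v1 k1) (hne2 : v2 ≠ k2)
    {i : V1} (hi : i ≠ k1) :
    IsLeaf (glueGraph G1 G2 v1 k1 v2 k2) (mkL i hi) ↔ IsLeaf G1 i := by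
  constructor
  · rintro ⟨W, hW, hWu⟩
    by_cases hiv : i = v1
    · refine ⟨k1, by rw [hiv]; exact h1, ?_⟩
      intro w hw
      by_contra hwk
      have hA1 : (glueGraph G1 G2 v1 k1 v2 k2).Adj (mkL i hi) (mkL w hwk) :=
        glue_adj_LL.2 hw
      have hA2 : (glueGraph G1 G2 v1 k1 v2 k2).Adj (mkL i hi) (mkR v2 hne2) :=
        glue_adj_LR.2 ⟨hiv, rfl⟩
      have e1 := hWu _ hA1
      have e2 := hWu _ hA2
      rw [← e2] at e1
      exact mkL_ne_mkR e1
    · obtain ⟨w', pW⟩ := W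
      rcases w' with w | w
      · have hW' : G1.Adj i w := hW
        refine ⟨w, hW', ?_⟩
        intro u hu
        have hu' : u ≠ k1 := fun hh => hiv (hk1.nbr_eq h1 (hh ▸ hu).symm)
        have := hWu (mkL u hu') (glue_adj_LL.2 hu)
        exact Sum.inl.inj (congrArg Subtype.val this)
      · have hW' : i = v1 ∧ w = v2 := hW
        exact absurd hW'.1 hiv
  · rintro ⟨w, hw, hwu⟩
    by_cases hiv : i = v1
    · refine ⟨mkR v2 hne2, glue_adj_LR.2 ⟨hiv, rfl⟩, ?_⟩
      rintro ⟨(u|u), pU⟩ hU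
      · have hU' : G1.Adj i u := hU
        have h3 : u = w := hwu u hU'
        have hwk : w = k1 := (hwu k1 (by rw [hiv]; exact h1)).symm
        exact absurd (congrArg Sum.inl (h3.trans hwk)) pU.1
      · have hU' : i = v1 ∧ u = v2 := hU
        exact Subtype.ext (congrArg Sum.inr hU'.2)
    · have hw' : w ≠ k1 := fun hh => hiv (hk1.nbr_eq h1 (hh ▸ hw).symm)
      refine ⟨mkL w hw', glue_adj_LL.2 hw, ?_⟩
      rintro ⟨(u|u), pU⟩ hU
      · have hU' : G1.Adj i u := hU
        exact Subtype.ext (congrArg Sum.inl (hwu u hU'))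
      · have hU' : i = v1 ∧ u = v2 := hU
        exact absurd hU'.1 hiv

lemma isLeaf_mkR (hk2 : IsLeaf G2 k2) (h2 : G2.Adj v2 k2) (hne1 : v1 ≠ k1)
    {l : V2} (hl : l ≠ k2) :
    IsLeaf (glueGraph G1 G2 v1 k1 v2 k2) (mkR l hl) ↔ IsLeaf G2 l := by
  constructor
  · rintro ⟨W, hW, hWu⟩
    by_cases hlv : l = v2
    · refine ⟨k2, by rw [hlv]; exact h2, ?_⟩
      intro w hw
      by_contra hwk
      have hA1 : (glueGraph G1 G2 v1 k1 v2 k2).Adj (mkR l hl) (mkR w hwk) :=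
        glue_adj_RR.2 hw
      have hA2 : (glueGraph G1 G2 v1 k1 v2 k2).Adj (mkR l hl) (mkL v1 hne1) := ⟨hlv, rfl⟩
      have e1 := hWu _ hA1
      have e2 := hWu _ hA2
      rw [← e2] at e1
      exact mkL_ne_mkR e1.symm
    · obtain ⟨w', pW⟩ := W
      rcases w' with w | w
      · have hW' : l = v2 ∧ w = v1 := hW
        exact absurd hW'.1 hlv
      · have hW' : G2.Adj l w := hW
        refine ⟨w, hW', ?_⟩
        intro u hu
        have hu' : u ≠ k2 := fun hh => hlv (hk2.nbr_eq h2 (hh ▸ hu).symm)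
        have := hWu (mkR u hu') (glue_adj_RR.2 hu)
        exact Sum.inr.inj (congrArg Subtype.val this)
  · rintro ⟨w, hw, hwu⟩
    by_cases hlv : l = v2
    · refine ⟨mkL v1 hne1, ⟨hlv, rfl⟩, ?_⟩
      rintro ⟨(u|u), pU⟩ hU
      · have hU' : l = v2 ∧ u = v1 := hU
        exact Subtype.ext (congrArg Sum.inl hU'.2)
      · have hU' : G2.Adj l u := hU
        have h3 : u = w := hwu u hU'
        have hwk : w = k2 := (hwu k2 (by rw [hlv]; exact h2)).symm
        exact absurd (congrArg Sum.inr (h3.trans hwk)) pU.2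
    · have hw' : w ≠ k2 := fun hh => hlv (hk2.nbr_eq h2 (hh ▸ hw).symm)
      refine ⟨mkR w hw', glue_adj_RR.2 hw, ?_⟩
      rintro ⟨(u|u), pU⟩ hU
      · have hU' : l = v2 ∧ u = v1 := hU
        exact absurd hU'.1 hlv
      · have hU' : G2.Adj l u := hU
        exact Subtype.ext (congrArg Sum.inr (hwu u hU'))

end LeafTransfer


section PhiHelpers

variable {G1 : SimpleGraph V1} {G2 : SimpleGraph V2}

lemma edge_in_lift (hne1 : v1 ≠ k1) {a b : V1} {p : G1.Walk a b} (hkp : k1 ∉ p.support)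
    {x y : V1} {px py} :
    s((⟨Sum.inl x, px⟩ : GlueV V1 V2 k1 k2), ⟨Sum.inl y, py⟩) ∈
        p.edges.map (Sym2.map (j1 hne1)) ↔ s(x, y) ∈ p.edges := by
  constructor
  · intro hmem
    obtain ⟨e0, he0, hmap⟩ := List.mem_map.1 hmem
    revert he0 hmap
    induction e0 using Sym2.ind with
    | _ u w =>
      intro he0 hmap
      have hu : u ≠ k1 := fun hh => hkp (hh ▸ p.fst_mem_support_of_mem_edges he0)
      have hw : w ≠ k1 := fun hh => hkp (hh ▸ p.snd_mem_support_of_mem_edges he0)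
      rw [Sym2.map_pair_eq, j1_apply hne1 hu, j1_apply hne1 hw] at hmap
      rcases Sym2.eq_iff.1 hmap with ⟨h1', h2'⟩ | ⟨h1', h2'⟩
      · obtain rfl : u = x := Sum.inl.inj (congrArg Subtype.val h1')
        obtain rfl : w = y := Sum.inl.inj (congrArg Subtype.val h2')
        exact he0
      · obtain rfl : u = y := Sum.inl.inj (congrArg Subtype.val h1')
        obtain rfl : w = x := Sum.inl.inj (congrArg Subtype.val h2')
        rwa [Sym2.eq_swap] at he0
  · intro hmem
    refine List.mem_map.2 ⟨s(x, y), hmem, ?_⟩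
    have hx : x ≠ k1 := fun hh => hkp (hh ▸ p.fst_mem_support_of_mem_edges hmem)
    have hy : y ≠ k1 := fun hh => hkp (hh ▸ p.snd_mem_support_of_mem_edges hmem)
    rw [Sym2.map_pair_eq, j1_apply hne1 hx, j1_apply hne1 hy, Sym2.eq_iff]
    left
    exact ⟨Subtype.ext rfl, Subtype.ext rfl⟩

lemma edge_in_lift2 (hne2 : v2 ≠ k2) {a b : V2} {p : G2.Walk a b} (hkp : k2 ∉ p.support)
    {x y : V2} {px py} :
    s((⟨Sum.inr x, px⟩ : GlueV V1 V2 k1 k2), ⟨Sum.inr y, py⟩) ∈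
        p.edges.map (Sym2.map (j2 hne2)) ↔ s(x, y) ∈ p.edges := by
  constructor
  · intro hmem
    obtain ⟨e0, he0, hmap⟩ := List.mem_map.1 hmem
    revert he0 hmap
    induction e0 using Sym2.ind with
    | _ u w =>
      intro he0 hmap
      have hu : u ≠ k2 := fun hh => hkp (hh ▸ p.fst_mem_support_of_mem_edges he0)
      have hw : w ≠ k2 := fun hh => hkp (hh ▸ p.snd_mem_support_of_mem_edges he0)
      rw [Sym2.map_pair_eq, j2_apply hne2 hu, j2_apply hne2 hw] at hmap
      rcases Sym2.eq_iff.1 hmap with ⟨h1', h2'⟩ | ⟨h1', h2'⟩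
      · obtain rfl : u = x := Sum.inr.inj (congrArg Subtype.val h1')
        obtain rfl : w = y := Sum.inr.inj (congrArg Subtype.val h2')
        exact he0
      · obtain rfl : u = y := Sum.inr.inj (congrArg Subtype.val h1')
        obtain rfl : w = x := Sum.inr.inj (congrArg Subtype.val h2')
        rwa [Sym2.eq_swap] at he0
  · intro hmem
    refine List.mem_map.2 ⟨s(x, y), hmem, ?_⟩
    have hx : x ≠ k2 := fun hh => hkp (hh ▸ p.fst_mem_support_of_mem_edges hmem)
    have hy : y ≠ k2 := fun hh => hkp (hh ▸ p.snd_mem_support_of_mem_edges hmem)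
    rw [Sym2.map_pair_eq, j2_apply hne2 hx, j2_apply hne2 hy, Sym2.eq_iff]
    left
    exact ⟨Subtype.ext rfl, Subtype.ext rfl⟩

lemma mem_map_j1_form (hne1 : v1 ≠ k1) {L : List (Sym2 V1)} {e' : Sym2 (GlueV V1 V2 k1 k2)}
    (h : e' ∈ L.map (Sym2.map (j1 hne1))) :
    ∃ (u w : V1) (hu : u ≠ k1) (hw : w ≠ k1), e' = s(mkL u hu, mkL w hw) := by
  obtain ⟨e0, _, hmap⟩ := List.mem_map.1 h
  revert hmap
  induction e0 using Sym2.ind with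
  | _ x y =>
    intro hmap
    obtain ⟨u, hu, hju⟩ := j1_form (V2 := V2) (k2 := k2) hne1 x
    obtain ⟨w, hw, hjw⟩ := j1_form (V2 := V2) (k2 := k2) hne1 y
    exact ⟨u, w, hu, hw, by rw [← hmap, Sym2.map_pair_eq, hju, hjw]⟩

lemma mem_map_j2_form (hne2 : v2 ≠ k2) {L : List (Sym2 V2)} {e' : Sym2 (GlueV V1 V2 k1 k2)}
    (h : e' ∈ L.map (Sym2.map (j2 hne2))) :
    ∃ (u w : V2) (hu : u ≠ k2) (hw : w ≠ k2), e' = s(mkR u hu, mkR w hw) := by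
  obtain ⟨e0, _, hmap⟩ := List.mem_map.1 h
  revert hmap
  induction e0 using Sym2.ind with
  | _ x y =>
    intro hmap
    obtain ⟨u, hu, hju⟩ := j2_form (V1 := V1) (k1 := k1) hne2 x
    obtain ⟨w, hw, hjw⟩ := j2_form (V1 := V1) (k1 := k1) hne2 y
    exact ⟨u, w, hu, hw, by rw [← hmap, Sym2.map_pair_eq, hju, hjw]⟩

lemma lift_isPath1 (hne1 : v1 ≠ k1) {a b : V1} {p : G1.Walk a b} (hp : p.IsPath)
    (hkp : k1 ∉ p.support) {A B : GlueV V1 V2 k1 k2}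
    {q : (glueGraph G1 G2 v1 k1 v2 k2).Walk A B}
    (hqs : q.support = p.support.map (j1 hne1)) : q.IsPath := by
  apply Walk.IsPath.mk'
  rw [hqs]
  refine List.Nodup.map_on ?_ hp.support_nodup
  intro x hx y hy hxy
  have hx' : x ≠ k1 := fun hh => hkp (hh ▸ hx)
  have hy' : y ≠ k1 := fun hh => hkp (hh ▸ hy)
  rw [j1_apply hne1 hx', j1_apply hne1 hy'] at hxy
  exact mkL_injective.1 hxy

lemma lift_isPath2 (hne2 : v2 ≠ k2) {a b : V2} {p : G2.Walk a b} (hp : p.IsPath)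
    (hkp : k2 ∉ p.support) {A B : GlueV V1 V2 k1 k2}
    {q : (glueGraph G1 G2 v1 k1 v2 k2).Walk A B}
    (hqs : q.support = p.support.map (j2 hne2)) : q.IsPath := by
  apply Walk.IsPath.mk'
  rw [hqs]
  refine List.Nodup.map_on ?_ hp.support_nodup
  intro x hx y hy hxy
  have hx' : x ≠ k2 := fun hh => hkp (hh ▸ hx)
  have hy' : y ≠ k2 := fun hh => hkp (hh ▸ hy)
  rw [j2_apply hne2 hx', j2_apply hne2 hy'] at hxy
  exact mkR_injective.1 hxy

lemma proj_isPath1 (hne1 : v1 ≠ k1) {a b : V1} {p : G1.Walk a b}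
    {A B : GlueV V1 V2 k1 k2} {q : (glueGraph G1 G2 v1 k1 v2 k2).Walk A B} (hq : q.IsPath)
    (hqs : q.support = p.support.map (j1 hne1)) : p.IsPath :=
  Walk.IsPath.mk' (List.Nodup.of_map _ (hqs ▸ hq.support_nodup))

lemma proj_isPath2 (hne2 : v2 ≠ k2) {a b : V2} {p : G2.Walk a b}
    {A B : GlueV V1 V2 k1 k2} {q : (glueGraph G1 G2 v1 k1 v2 k2).Walk A B} (hq : q.IsPath)
    (hqs : q.support = p.support.map (j2 hne2)) : p.IsPath :=
  Walk.IsPath.mk' (List.Nodup.of_map _ (hqs ▸ hq.support_nodup))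

end PhiHelpers

section PhiPairs

variable {G1 : SimpleGraph V1} {G2 : SimpleGraph V2}

lemma phi_pair_left (hk1 : IsLeaf G1 k1) (h1 : G1.Adj v1 k1) (hne2 : v2 ≠ k2)
    {i j : V1} (hi : i ≠ k1) (hj : j ≠ k1) (hnon : ¬ onPath G1 i j s(v1, k1)) :
    phiFun v1 k1 v2 k2 (pathVec G1 i j, 0) =
      pathVec (glueGraph G1 G2 v1 k1 v2 k2) (mkL i hi) (mkL j hj) := by
  have hne1 : v1 ≠ k1 := h1.ne
  funext e'
  induction e' using Sym2.ind with
  | _ A B =>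
    obtain ⟨a', pA⟩ := A
    obtain ⟨b', pB⟩ := B
    rcases a' with a | a <;> rcases b' with b | b
    · -- inl, inl
      rw [phiFun_mk]
      show pathVec G1 i j s(a, b) = _
      unfold pathVec
      refine if_congr ?_ rfl rfl
      constructor
      · rintro ⟨p, hp, he⟩
        have hksup : k1 ∉ p.support := leaf_not_mem_support hk1 h1 p hp hi hj
        obtain ⟨q, hqs, hqe⟩ := liftWalk1 (G2 := G2) (v2 := v2) (k2 := k2) hne1 p hi hj hksup
        refine ⟨q, lift_isPath1 hne1 hp hksup hqs, ?_⟩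
        rw [hqe]
        exact (edge_in_lift hne1 hksup).2 he
      · rintro ⟨q, hq, he⟩
        have hall := staysLeft q hq rfl rfl
        obtain ⟨a0, b0, ha0, hb0, p, hAeq, hBeq, hkp, hps, hpe⟩ := projWalk1 hne1 q hall
        obtain rfl : i = a0 := mkL_injective.1 hAeq
        obtain rfl : j = b0 := mkL_injective.1 hBeq
        refine ⟨p, proj_isPath1 hne1 hq hps, ?_⟩
        rw [hpe] at he
        exact (edge_in_lift hne1 hkp).1 he
    · -- inl, inr
      rw [phiFun_mk]
      have hR : pathVec (glueGraph G1 G2 v1 k1 v2 k2) (mkL i hi) (mkL j hj)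
          s((⟨Sum.inl a, pA⟩ : GlueV V1 V2 k1 k2), ⟨Sum.inr b, pB⟩) = 0 := by
        unfold pathVec
        rw [if_neg]
        rintro ⟨q, hq, he⟩
        have hall := staysLeft q hq rfl rfl
        have hmem : (⟨Sum.inr b, pB⟩ : GlueV V1 V2 k1 k2) ∈ q.support :=
          mem_support_of_mem_edge q he (Sym2.mem_iff.2 (Or.inr rfl))
        simpa using hall _ hmem
      rw [hR]
      show (if a = v1 ∧ b = v2
        then (pathVec G1 i j s(v1, k1) + (0 : Sym2 V2 → ℝ) s(v2, k2)) / 2 else 0) = 0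
      split
      · have hx0 : pathVec G1 i j s(v1, k1) = 0 := if_neg hnon
        rw [hx0]
        norm_num
      · rfl
    · -- inr, inl
      rw [phiFun_mk]
      have hR : pathVec (glueGraph G1 G2 v1 k1 v2 k2) (mkL i hi) (mkL j hj)
          s((⟨Sum.inr a, pA⟩ : GlueV V1 V2 k1 k2), ⟨Sum.inl b, pB⟩) = 0 := by
        unfold pathVec
        rw [if_neg]
        rintro ⟨q, hq, he⟩
        have hall := staysLeft q hq rfl rfl
        have hmem : (⟨Sum.inr a, pA⟩ : GlueV V1 V2 k1 k2) ∈ q.support :=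
          mem_support_of_mem_edge q he (Sym2.mem_iff.2 (Or.inl rfl))
        simpa using hall _ hmem
      rw [hR]
      show (if a = v2 ∧ b = v1
        then (pathVec G1 i j s(v1, k1) + (0 : Sym2 V2 → ℝ) s(v2, k2)) / 2 else 0) = 0
      split
      · have hx0 : pathVec G1 i j s(v1, k1) = 0 := if_neg hnon
        rw [hx0]
        norm_num
      · rfl
    · -- inr, inr
      rw [phiFun_mk]
      have hR : pathVec (glueGraph G1 G2 v1 k1 v2 k2) (mkL i hi) (mkL j hj)
          s((⟨Sum.inr a, pA⟩ : GlueV V1 V2 k1 k2), ⟨Sum.inr b, pB⟩) = 0 := by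
        unfold pathVec
        rw [if_neg]
        rintro ⟨q, hq, he⟩
        have hall := staysLeft q hq rfl rfl
        have hmem : (⟨Sum.inr a, pA⟩ : GlueV V1 V2 k1 k2) ∈ q.support :=
          mem_support_of_mem_edge q he (Sym2.mem_iff.2 (Or.inl rfl))
        simpa using hall _ hmem
      rw [hR]
      rfl

lemma phi_pair_right (hk2 : IsLeaf G2 k2) (h2 : G2.Adj v2 k2) (hne1 : v1 ≠ k1)
    {l m : V2} (hl : l ≠ k2) (hm : m ≠ k2) (hnon : ¬ onPath G2 l m s(v2, k2)) :
    phiFun v1 k1 v2 k2 (0, pathVec G2 l m) =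
      pathVec (glueGraph G1 G2 v1 k1 v2 k2) (mkR l hl) (mkR m hm) := by
  have hne2 : v2 ≠ k2 := h2.ne
  funext e'
  induction e' using Sym2.ind with
  | _ A B =>
    obtain ⟨a', pA⟩ := A
    obtain ⟨b', pB⟩ := B
    rcases a' with a | a <;> rcases b' with b | b
    · -- inl, inl
      rw [phiFun_mk]
      have hR : pathVec (glueGraph G1 G2 v1 k1 v2 k2) (mkR l hl) (mkR m hm)
          s((⟨Sum.inl a, pA⟩ : GlueV V1 V2 k1 k2), ⟨Sum.inl b, pB⟩) = 0 := by
        unfold pathVec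
        rw [if_neg]
        rintro ⟨q, hq, he⟩
        have hall := staysRight q hq rfl rfl
        have hmem : (⟨Sum.inl a, pA⟩ : GlueV V1 V2 k1 k2) ∈ q.support :=
          mem_support_of_mem_edge q he (Sym2.mem_iff.2 (Or.inl rfl))
        simpa using hall _ hmem
      rw [hR]
      rfl
    · -- inl, inr
      rw [phiFun_mk]
      have hR : pathVec (glueGraph G1 G2 v1 k1 v2 k2) (mkR l hl) (mkR m hm)
          s((⟨Sum.inl a, pA⟩ : GlueV V1 V2 k1 k2), ⟨Sum.inr b, pB⟩) = 0 := by
        unfold pathVec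
        rw [if_neg]
        rintro ⟨q, hq, he⟩
        have hall := staysRight q hq rfl rfl
        have hmem : (⟨Sum.inl a, pA⟩ : GlueV V1 V2 k1 k2) ∈ q.support :=
          mem_support_of_mem_edge q he (Sym2.mem_iff.2 (Or.inl rfl))
        simpa using hall _ hmem
      rw [hR]
      show (if a = v1 ∧ b = v2
        then ((0 : Sym2 V1 → ℝ) s(v1, k1) + pathVec G2 l m s(v2, k2)) / 2 else 0) = 0
      split
      · have hx0 : pathVec G2 l m s(v2, k2) = 0 := if_neg hnon
        rw [hx0]
        norm_num
      · rfl
    · -- inr, inl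
      rw [phiFun_mk]
      have hR : pathVec (glueGraph G1 G2 v1 k1 v2 k2) (mkR l hl) (mkR m hm)
          s((⟨Sum.inr a, pA⟩ : GlueV V1 V2 k1 k2), ⟨Sum.inl b, pB⟩) = 0 := by
        unfold pathVec
        rw [if_neg]
        rintro ⟨q, hq, he⟩
        have hall := staysRight q hq rfl rfl
        have hmem : (⟨Sum.inl b, pB⟩ : GlueV V1 V2 k1 k2) ∈ q.support :=
          mem_support_of_mem_edge q he (Sym2.mem_iff.2 (Or.inr rfl))
        simpa using hall _ hmem
      rw [hR]
      show (if a = v2 ∧ b = v1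
        then ((0 : Sym2 V1 → ℝ) s(v1, k1) + pathVec G2 l m s(v2, k2)) / 2 else 0) = 0
      split
      · have hx0 : pathVec G2 l m s(v2, k2) = 0 := if_neg hnon
        rw [hx0]
        norm_num
      · rfl
    · -- inr, inr
      rw [phiFun_mk]
      show pathVec G2 l m s(a, b) = _
      unfold pathVec
      refine if_congr ?_ rfl rfl
      constructor
      · rintro ⟨p, hp, he⟩
        have hksup : k2 ∉ p.support := leaf_not_mem_support hk2 h2 p hp hl hm
        obtain ⟨q, hqs, hqe⟩ := liftWalk2 (G1 := G1) (v1 := v1) (k1 := k1) hne2 p hl hm hksup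
        refine ⟨q, lift_isPath2 hne2 hp hksup hqs, ?_⟩
        rw [hqe]
        exact (edge_in_lift2 hne2 hksup).2 he
      · rintro ⟨q, hq, he⟩
        have hall := staysRight q hq rfl rfl
        obtain ⟨a0, b0, ha0, hb0, p, hAeq, hBeq, hkp, hps, hpe⟩ := projWalk2 hne2 q hall
        obtain rfl : l = a0 := mkR_injective.1 hAeq
        obtain rfl : m = b0 := mkR_injective.1 hBeq
        refine ⟨p, proj_isPath2 hne2 hq hps, ?_⟩
        rw [hpe] at he
        exact (edge_in_lift2 hne2 hkp).1 he

lemma phi_pair_cross (hG1 : G1.IsTree) (hG2 : G2.IsTree)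
    (hk1 : IsLeaf G1 k1) (h1 : G1.Adj v1 k1) (hk2 : IsLeaf G2 k2) (h2 : G2.Adj v2 k2)
    {i : V1} {l : V2} (hi : i ≠ k1) (hl : l ≠ k2) :
    phiFun v1 k1 v2 k2 (pathVec G1 i k1, pathVec G2 l k2) =
      pathVec (glueGraph G1 G2 v1 k1 v2 k2) (mkL i hi) (mkR l hl) := by
  have hne1 : v1 ≠ k1 := h1.ne
  have hne2 : v2 ≠ k2 := h2.ne
  obtain ⟨p1, hp1, -⟩ := hG1.existsUnique_path i k1
  obtain ⟨p2, hp2, -⟩ := hG2.existsUnique_path l k2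
  obtain ⟨r1, hr1, hk1r, hsub1, hiff1⟩ := path_to_leaf_decomp p1 hk1 h1 hp1 hi
  obtain ⟨r2, hr2, hk2r, hsub2, hiff2⟩ := path_to_leaf_decomp p2 hk2 h2 hp2 hl
  have hk2rev : k2 ∉ r2.reverse.support := by
    rw [Walk.support_reverse]
    simpa using hk2r
  obtain ⟨t1, ht1s, ht1e⟩ := liftWalk1 (G2 := G2) (v2 := v2) (k2 := k2) hne1 r1 hi hne1 hk1r
  obtain ⟨t2, ht2s, ht2e⟩ :=
    liftWalk2 (G1 := G1) (v1 := v1) (k1 := k1) hne2 r2.reverse hne2 hl hk2rev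
  let q : (glueGraph G1 G2 v1 k1 v2 k2).Walk (mkL i hi) (mkR l hl) :=
    t1.append (Walk.cons (glue_adj_LR.2 ⟨rfl, rfl⟩) t2)
  have hqs : q.support =
      r1.support.map (j1 hne1) ++ r2.reverse.support.map (j2 hne2) := by
    show (t1.append _).support = _
    rw [Walk.support_append, Walk.support_cons, List.tail_cons, ht1s, ht2s]
  have hqe : q.edges = r1.edges.map (Sym2.map (j1 hne1)) ++
      s(mkL v1 hne1, mkR v2 hne2) :: r2.reverse.edges.map (Sym2.map (j2 hne2)) := by
    show (t1.append _).edges = _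
    rw [Walk.edges_append, Walk.edges_cons, ht1e, ht2e]
  have hq : q.IsPath := by
    apply Walk.IsPath.mk'
    rw [hqs, List.nodup_append]
    refine ⟨?_, ?_, ?_⟩
    · refine List.Nodup.map_on ?_ hr1.support_nodup
      intro x hx y hy hxy
      have hx' : x ≠ k1 := fun hh => hk1r (hh ▸ hx)
      have hy' : y ≠ k1 := fun hh => hk1r (hh ▸ hy)
      rw [j1_apply hne1 hx', j1_apply hne1 hy'] at hxy
      exact mkL_injective.1 hxy
    · refine List.Nodup.map_on ?_ ((Walk.isPath_reverse_iff r2).2 hr2).support_nodup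
      intro x hx y hy hxy
      have hx' : x ≠ k2 := fun hh => hk2rev (hh ▸ hx)
      have hy' : y ≠ k2 := fun hh => hk2rev (hh ▸ hy)
      rw [j2_apply hne2 hx', j2_apply hne2 hy'] at hxy
      exact mkR_injective.1 hxy
    · intro z hz1 z' hz2 hzz
      subst hzz
      obtain ⟨x, -, hxz⟩ := List.mem_map.1 hz1
      obtain ⟨y, -, hyz⟩ := List.mem_map.1 hz2
      obtain ⟨u, hu, hju⟩ := j1_form (V2 := V2) (k2 := k2) hne1 x
      obtain ⟨w, hw, hjw⟩ := j2_form (V1 := V1) (k1 := k1) hne2 y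
      rw [hju] at hxz
      rw [hjw] at hyz
      exact mkL_ne_mkR (hxz.trans hyz.symm)
  have hx1 : pathVec G1 i k1 s(v1, k1) = 1 := by
    unfold pathVec
    rw [if_pos]
    exact ⟨p1, hp1, (hiff1 _).2 (Or.inl rfl)⟩
  have hy1 : pathVec G2 l k2 s(v2, k2) = 1 := by
    unfold pathVec
    rw [if_pos]
    exact ⟨p2, hp2, (hiff2 _).2 (Or.inl rfl)⟩
  funext e'
  induction e' using Sym2.ind with
  | _ A B =>
    obtain ⟨a', pA⟩ := A
    obtain ⟨b', pB⟩ := B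
    rcases a' with a | a <;> rcases b' with b | b
    · -- inl, inl
      have hak : a ≠ k1 := fun hh => pA.1 (congrArg Sum.inl hh)
      have hbk : b ≠ k1 := fun hh => pB.1 (congrArg Sum.inl hh)
      rw [phiFun_mk]
      show pathVec G1 i k1 s(a, b) = _
      unfold pathVec
      refine if_congr ?_ rfl rfl
      constructor
      · intro hon
        have he1 : s(a, b) ∈ p1.edges := (onPath_tree_iff hG1 hp1).1 hon
        rcases (hiff1 _).1 he1 with heq | hm
        · exfalso
          rcases Sym2.eq_iff.1 heq with ⟨-, hb'⟩ | ⟨ha', -⟩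
          exacts [hbk hb', hak ha']
        · refine ⟨q, hq, ?_⟩
          rw [hqe]
          exact List.mem_append_left _ ((edge_in_lift hne1 hk1r).2 hm)
      · rintro ⟨q2, hq2, he⟩
        obtain ⟨a0, l0, ha0, hl0, p1', p2', hAeq, hBeq, hk1p, hk2p, hqs', hqe'⟩ :=
          decompose hne1 hne2 q2 hq2 rfl rfl
        obtain rfl : i = a0 := mkL_injective.1 hAeq
        rw [hqe'] at he
        rcases List.mem_append.1 he with hL | hR
        · have hm : s(a, b) ∈ p1'.edges := (edge_in_lift hne1 hk1p).1 hL
          have hp1'nodup : p1'.support.Nodup := by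
            have := hq2.support_nodup
            rw [hqs', List.nodup_append] at this
            exact List.Nodup.of_map _ this.1
          refine ⟨p1'.append (Walk.cons h1 Walk.nil), ?_, ?_⟩
          · apply Walk.IsPath.mk'
            rw [Walk.support_append, Walk.support_cons, Walk.support_nil, List.tail_cons,
              List.nodup_append]
            refine ⟨hp1'nodup, List.nodup_singleton _, ?_⟩
            intro z hz1 z' hz2 hzz
            rw [List.mem_singleton] at hz2
            rw [hzz, hz2] at hz1
            exact hk1p hz1
          · rw [Walk.edges_append]
            exact List.mem_append_left _ hm
        · rcases List.mem_cons.1 hR with heqE | hR'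
          · exfalso
            rcases Sym2.eq_iff.1 heqE with ⟨-, h2'⟩ | ⟨h1', -⟩
            · exact absurd (congrArg Subtype.val h2') (by simp [mkR])
            · exact absurd (congrArg Subtype.val h1') (by simp [mkR])
          · exfalso
            obtain ⟨u, w, hu, hw, heq2⟩ := mem_map_j2_form hne2 hR'
            rcases Sym2.eq_iff.1 heq2 with ⟨h1', -⟩ | ⟨h1', -⟩
            · exact absurd (congrArg Subtype.val h1') (by simp [mkR])
            · exact absurd (congrArg Subtype.val h1') (by simp [mkR])
    · -- inl, inr
      rw [phiFun_mk]
      show (if a = v1 ∧ b = v2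
        then (pathVec G1 i k1 s(v1, k1) + pathVec G2 l k2 s(v2, k2)) / 2 else 0) = _
      rw [hx1, hy1]
      split_ifs with hcond
      · have hEeq : s((⟨Sum.inl a, pA⟩ : GlueV V1 V2 k1 k2), ⟨Sum.inr b, pB⟩)
            = s(mkL v1 hne1, mkR v2 hne2) := by
          rw [Sym2.eq_iff]
          left
          exact ⟨Subtype.ext (congrArg Sum.inl hcond.1), Subtype.ext (congrArg Sum.inr hcond.2)⟩
        have hval : pathVec (glueGraph G1 G2 v1 k1 v2 k2) (mkL i hi) (mkR l hl)
            s((⟨Sum.inl a, pA⟩ : GlueV V1 V2 k1 k2), ⟨Sum.inr b, pB⟩) = 1 := by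
          unfold pathVec
          rw [if_pos]
          refine ⟨q, hq, ?_⟩
          rw [hqe]
          exact List.mem_append_right _ (List.mem_cons.2 (Or.inl hEeq))
        exact (by norm_num : ((1 : ℝ) + 1) / 2 = 1).trans hval.symm
      · symm
        unfold pathVec
        rw [if_neg]
        rintro ⟨q2, hq2, he⟩
        have hadj := (glueGraph G1 G2 v1 k1 v2 k2).mem_edgeSet.1 (q2.edges_subset_edgeSet he)
        exact hcond hadj
    · -- inr, inl
      rw [phiFun_mk]
      show (if a = v2 ∧ b = v1
        then (pathVec G1 i k1 s(v1, k1) + pathVec G2 l k2 s(v2, k2)) / 2 else 0) = _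
      rw [hx1, hy1]
      split_ifs with hcond
      · have hEeq : s((⟨Sum.inr a, pA⟩ : GlueV V1 V2 k1 k2), ⟨Sum.inl b, pB⟩)
            = s(mkL v1 hne1, mkR v2 hne2) := by
          rw [Sym2.eq_iff]
          right
          exact ⟨Subtype.ext (congrArg Sum.inr hcond.1), Subtype.ext (congrArg Sum.inl hcond.2)⟩
        have hval : pathVec (glueGraph G1 G2 v1 k1 v2 k2) (mkL i hi) (mkR l hl)
            s((⟨Sum.inr a, pA⟩ : GlueV V1 V2 k1 k2), ⟨Sum.inl b, pB⟩) = 1 := by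
          unfold pathVec
          rw [if_pos]
          refine ⟨q, hq, ?_⟩
          rw [hqe]
          exact List.mem_append_right _ (List.mem_cons.2 (Or.inl hEeq))
        exact (by norm_num : ((1 : ℝ) + 1) / 2 = 1).trans hval.symm
      · symm
        unfold pathVec
        rw [if_neg]
        rintro ⟨q2, hq2, he⟩
        have hadj := (glueGraph G1 G2 v1 k1 v2 k2).mem_edgeSet.1 (q2.edges_subset_edgeSet he)
        exact hcond hadj
    · -- inr, inr
      have hak : a ≠ k2 := fun hh => pA.2 (congrArg Sum.inr hh)
      have hbk : b ≠ k2 := fun hh => pB.2 (congrArg Sum.inr hh)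
      rw [phiFun_mk]
      show pathVec G2 l k2 s(a, b) = _
      unfold pathVec
      refine if_congr ?_ rfl rfl
      constructor
      · intro hon
        have he1 : s(a, b) ∈ p2.edges := (onPath_tree_iff hG2 hp2).1 hon
        rcases (hiff2 _).1 he1 with heq | hm
        · exfalso
          rcases Sym2.eq_iff.1 heq with ⟨-, hb'⟩ | ⟨ha', -⟩
          exacts [hbk hb', hak ha']
        · refine ⟨q, hq, ?_⟩
          rw [hqe]
          refine List.mem_append_right _ (List.mem_cons_of_mem _ ?_)
          refine (edge_in_lift2 hne2 hk2rev).2 ?_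
          rw [Walk.edges_reverse]
          exact List.mem_reverse.2 hm
      · rintro ⟨q2, hq2, he⟩
        obtain ⟨a0, l0, ha0, hl0, p1', p2', hAeq, hBeq, hk1p, hk2p, hqs', hqe'⟩ :=
          decompose hne1 hne2 q2 hq2 rfl rfl
        obtain rfl : l = l0 := mkR_injective.1 hBeq
        rw [hqe'] at he
        rcases List.mem_append.1 he with hL | hR
        · exfalso
          obtain ⟨u, w, hu, hw, heq2⟩ := mem_map_j1_form hne1 hL
          rcases Sym2.eq_iff.1 heq2 with ⟨h1', -⟩ | ⟨h1', -⟩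
          · exact absurd (congrArg Subtype.val h1') (by simp [mkL])
          · exact absurd (congrArg Subtype.val h1') (by simp [mkL])
        · rcases List.mem_cons.1 hR with heqE | hR'
          · exfalso
            rcases Sym2.eq_iff.1 heqE with ⟨h1', -⟩ | ⟨-, h2'⟩
            · exact absurd (congrArg Subtype.val h1') (by simp [mkL])
            · exact absurd (congrArg Subtype.val h2') (by simp [mkL])
          · have hm : s(a, b) ∈ p2'.edges := (edge_in_lift2 hne2 hk2p).1 hR'
            have hp2'nodup : p2'.support.Nodup := by
              have := hq2.support_nodup
              rw [hqs', List.nodup_append] at this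
              exact List.Nodup.of_map _ this.2.1
            refine ⟨(Walk.cons h2.symm p2').reverse, ?_, ?_⟩
            · rw [Walk.isPath_reverse_iff, Walk.cons_isPath_iff]
              exact ⟨Walk.IsPath.mk' hp2'nodup, hk2p⟩
            · rw [Walk.edges_reverse, List.mem_reverse, Walk.edges_cons]
              exact List.mem_cons_of_mem _ hm

end PhiPairs
end Glue

/-- For a gluing `T = T1 *_{e1,e2} T2` of trees along leaf edges, and any
pair of gluing integral projections `π1, π2` onto `Δ₃`, the path polytope `P_T` is affinely
isomorphic to the toric fiber product `(P_{T1} ∨̂ {0}) ×_{Δ₃} (P_{T2} ∨̂ {0})`. -/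
theorem pathPolytope_gluing_tfp {V1 V2 : Type} [Fintype V1] [Fintype V2]
    (G1 : SimpleGraph V1) (G2 : SimpleGraph V2)
    (hG1 : G1.IsTree) (hG2 : G2.IsTree)
    (v1 k1 : V1) (v2 k2 : V2)
    (hk1 : IsLeaf G1 k1) (hk2 : IsLeaf G2 k2)
    (h1 : G1.Adj v1 k1) (h2 : G2.Adj v2 k2)
    (π1 : (Sym2 V1 → ℝ) →ᵃ[ℝ] (Fin 3 → ℝ)) (π2 : (Sym2 V2 → ℝ) →ᵃ[ℝ] (Fin 3 → ℝ))
    (hπ10 : π1 0 = ![0, 0, 1]) (hπ20 : π2 0 = ![1, 0, 0])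
    (hπ1 : ∀ i j : V1, i ≠ j → IsLeaf G1 i → IsLeaf G1 j →
      π1 (pathVec G1 i j) = if onPath G1 i j s(v1, k1) then ![0, 1, 0] else ![1, 0, 0])
    (hπ2 : ∀ i j : V2, i ≠ j → IsLeaf G2 i → IsLeaf G2 j →
      π2 (pathVec G2 i j) = if onPath G2 i j s(v2, k2) then ![0, 1, 0] else ![0, 0, 1]) :
    ∃ φ : ((Sym2 V1 → ℝ) × (Sym2 V2 → ℝ)) →ᵃ[ℝ] (Sym2 (GlueV V1 V2 k1 k2) → ℝ),
      Set.InjOn φ (tfp π1 π2 (convexHull ℝ (pathPolytope G1 ∪ {0}))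
        (convexHull ℝ (pathPolytope G2 ∪ {0}))) ∧
      φ '' tfp π1 π2 (convexHull ℝ (pathPolytope G1 ∪ {0}))
          (convexHull ℝ (pathPolytope G2 ∪ {0}))
        = pathPolytope (glueGraph G1 G2 v1 k1 v2 k2) := by
  classical
  have hne1 : v1 ≠ k1 := h1.ne
  have hne2 : v2 ≠ k2 := h2.ne
  set S1 : Set (Sym2 V1 → ℝ) :=
    {x | ∃ i j : V1, i ≠ j ∧ IsLeaf G1 i ∧ IsLeaf G1 j ∧ x = pathVec G1 i j} with hS1def
  set S2 : Set (Sym2 V2 → ℝ) :=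
    {x | ∃ i j : V2, i ≠ j ∧ IsLeaf G2 i ∧ IsLeaf G2 j ∧ x = pathVec G2 i j} with hS2def
  have hA1 : convexHull ℝ (pathPolytope G1 ∪ {0}) = convexHull ℝ (S1 ∪ {0}) :=
    convexHull_convexHull_union_left S1 {0}
  have hA2 : convexHull ℝ (pathPolytope G2 ∪ {0}) = convexHull ℝ (S2 ∪ {0}) :=
    convexHull_convexHull_union_left S2 {0}
  have hcubeset : ∀ (W : Type) (S : Set (Sym2 W → ℝ)),
      (∀ g ∈ S, ∀ e, 0 ≤ g e ∧ g e ≤ 1) →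
      ∀ f ∈ convexHull ℝ S, ∀ e, 0 ≤ f e ∧ f e ≤ 1 := by
    intro W S hS f hf
    have hsub : convexHull ℝ S ⊆ {g : Sym2 W → ℝ | ∀ e, 0 ≤ g e ∧ g e ≤ 1} := by
      apply convexHull_min
      · exact hS
      · intro g hg g' hg' a b ha hb hab
        intro e
        obtain ⟨h1g, h2g⟩ := hg e
        obtain ⟨h1g', h2g'⟩ := hg' e
        have hval : (a • g + b • g') e = a * g e + b * g' e := rfl
        constructor
        · rw [hval]; nlinarith
        · rw [hval]; nlinarith
    exact hsub hf
  have hgen1 : ∀ g ∈ S1 ∪ {0}, ∀ e, 0 ≤ g e ∧ g e ≤ 1 := by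
    rintro g (⟨i, j, -, -, -, rfl⟩ | hg) e
    · rcases pathVec_zero_one (G := G1) i j e with h | h <;> rw [h] <;> norm_num
    · rw [Set.mem_singleton_iff] at hg
      subst hg
      norm_num
  have hgen2 : ∀ g ∈ S2 ∪ {0}, ∀ e, 0 ≤ g e ∧ g e ≤ 1 := by
    rintro g (⟨i, j, -, -, -, rfl⟩ | hg) e
    · rcases pathVec_zero_one (G := G2) i j e with h | h <;> rw [h] <;> norm_num
    · rw [Set.mem_singleton_iff] at hg
      subst hg
      norm_num
  have hext1 : Set.extremePoints ℝ (convexHull ℝ (pathPolytope G1 ∪ {0})) = S1 ∪ {0} := by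
    rw [hA1]
    apply subset_antisymm
    · exact extremePoints_convexHull_subset
    · intro x hx
      apply mem_extremePoints_of_zero_one (hcubeset V1 (S1 ∪ {0}) hgen1)
        (subset_convexHull ℝ _ hx)
      rcases hx with ⟨i, j, -, -, -, rfl⟩ | hx
      · exact pathVec_zero_one i j
      · rw [Set.mem_singleton_iff] at hx
        subst hx
        exact fun e => Or.inl rfl
  have hext2 : Set.extremePoints ℝ (convexHull ℝ (pathPolytope G2 ∪ {0})) = S2 ∪ {0} := by
    rw [hA2]
    apply subset_antisymm
    · exact extremePoints_convexHull_subset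
    · intro x hx
      apply mem_extremePoints_of_zero_one (hcubeset V2 (S2 ∪ {0}) hgen2)
        (subset_convexHull ℝ _ hx)
      rcases hx with ⟨i, j, -, -, -, rfl⟩ | hx
      · exact pathVec_zero_one i j
      · rw [Set.mem_singleton_iff] at hx
        subst hx
        exact fun e => Or.inl rfl
  have hvne : ∀ (u w : Fin 3 → ℝ) (t : Fin 3), u t ≠ w t → u ≠ w :=
    fun _ _ t h hc => h (congrFun hc t)
  -- normalization helpers
  have honL : ∀ i : V1, i ≠ k1 → onPath G1 i k1 s(v1, k1) := by
    intro i hik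
    obtain ⟨p, hp, -⟩ := hG1.existsUnique_path k1 i
    exact onPath_comm.1 ⟨p, hp, leaf_edge_mem_edges hk1 h1 p hik⟩
  have honR : ∀ l : V2, l ≠ k2 → onPath G2 l k2 s(v2, k2) := by
    intro l hlk
    obtain ⟨p, hp, -⟩ := hG2.existsUnique_path k2 l
    exact onPath_comm.1 ⟨p, hp, leaf_edge_mem_edges hk2 h2 p hlk⟩
  have hnormL : ∀ i j : V1, i ≠ j → IsLeaf G1 i → IsLeaf G1 j → onPath G1 i j s(v1, k1) →
      ∃ i' : V1, ∃ hi' : i' ≠ k1, IsLeaf G1 i' ∧ pathVec G1 i j = pathVec G1 i' k1 := by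
    intro i j hij hLi hLj hon
    obtain ⟨p, hp, he⟩ := hon
    have hks : k1 ∈ p.support := mem_support_of_mem_edge p he (Sym2.mem_iff.2 (Or.inr rfl))
    by_cases hik : i = k1
    · refine ⟨j, fun hh => hij (hik.trans hh.symm), hLj, ?_⟩
      exact (pathVec_comm (G := G1) i j).trans (congrArg (pathVec G1 j) hik)
    · by_cases hjk : j = k1
      · exact ⟨i, hik, hLi, congrArg (pathVec G1 i) hjk⟩
      · exact absurd hks (leaf_not_mem_support hk1 h1 p hp hik hjk)
  have hnormR : ∀ l m : V2, l ≠ m → IsLeaf G2 l → IsLeaf G2 m → onPath G2 l m s(v2, k2) →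
      ∃ l' : V2, ∃ hl' : l' ≠ k2, IsLeaf G2 l' ∧ pathVec G2 l m = pathVec G2 l' k2 := by
    intro l m hlm hLl hLm hon
    obtain ⟨p, hp, he⟩ := hon
    have hks : k2 ∈ p.support := mem_support_of_mem_edge p he (Sym2.mem_iff.2 (Or.inr rfl))
    by_cases hlk : l = k2
    · refine ⟨m, fun hh => hlm (hlk.trans hh.symm), hLm, ?_⟩
      exact (pathVec_comm (G := G2) l m).trans (congrArg (pathVec G2 m) hlk)
    · by_cases hmk : m = k2
      · exact ⟨l, hlk, hLl, congrArg (pathVec G2 l) hmk⟩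
      · exact absurd hks (leaf_not_mem_support hk2 h2 p hp hlk hmk)
  have hnotkL : ∀ i j : V1, i ≠ j → ¬ onPath G1 i j s(v1, k1) → i ≠ k1 ∧ j ≠ k1 := by
    intro i j hij hnon
    constructor
    · intro hik
      apply hnon
      rw [hik]
      exact onPath_comm.1 (honL j (fun hh => hij (hik.trans hh.symm)))
    · intro hjk
      apply hnon
      rw [hjk]
      exact honL i (fun hh => hij (hh.trans hjk.symm))
  have hnotkR : ∀ l m : V2, l ≠ m → ¬ onPath G2 l m s(v2, k2) → l ≠ k2 ∧ m ≠ k2 := by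
    intro l m hlm hnon
    constructor
    · intro hlk
      apply hnon
      rw [hlk]
      exact onPath_comm.1 (honR m (fun hh => hlm (hlk.trans hh.symm)))
    · intro hmk
      apply hnon
      rw [hmk]
      exact honR l (fun hh => hlm (hh.trans hmk.symm))
  -- classification of matching extreme-point pairs
  have hM : ∀ x y, x ∈ S1 ∪ {0} → y ∈ S2 ∪ {0} → π1 x = π2 y →
      (∃ i : V1, ∃ l : V2, ∃ hi : i ≠ k1, ∃ hl : l ≠ k2, IsLeaf G1 i ∧ IsLeaf G2 l ∧
        x = pathVec G1 i k1 ∧ y = pathVec G2 l k2) ∨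
      ((∃ i j : V1, i ≠ j ∧ i ≠ k1 ∧ j ≠ k1 ∧ IsLeaf G1 i ∧ IsLeaf G1 j ∧
        ¬ onPath G1 i j s(v1, k1) ∧ x = pathVec G1 i j) ∧ y = 0) ∨
      (x = 0 ∧ ∃ l m : V2, l ≠ m ∧ l ≠ k2 ∧ m ≠ k2 ∧ IsLeaf G2 l ∧ IsLeaf G2 m ∧
        ¬ onPath G2 l m s(v2, k2) ∧ y = pathVec G2 l m) := by
    intro x y hx hy hmatch
    rcases hx with hx1 | hx0
    · obtain ⟨i, j, hij, hLi, hLj, rfl⟩ := hx1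
      rw [hπ1 i j hij hLi hLj] at hmatch
      by_cases hon : onPath G1 i j s(v1, k1)
      · rw [if_pos hon] at hmatch
        rcases hy with hy1 | hy0
        · obtain ⟨l, m, hlm, hLl, hLm, rfl⟩ := hy1
          rw [hπ2 l m hlm hLl hLm] at hmatch
          by_cases hon2 : onPath G2 l m s(v2, k2)
          · left
            obtain ⟨i', hi', hLi', hxeq⟩ := hnormL i j hij hLi hLj hon
            obtain ⟨l', hl', hLl', hyeq⟩ := hnormR l m hlm hLl hLm hon2
            exact ⟨i', l', hi', hl', hLi', hLl', hxeq, hyeq⟩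
          · rw [if_neg hon2] at hmatch
            exact absurd hmatch (hvne _ _ 1 (by norm_num))
        · rw [Set.mem_singleton_iff] at hy0
          rw [hy0, hπ20] at hmatch
          exact absurd hmatch (hvne _ _ 0 (by norm_num))
      · rw [if_neg hon] at hmatch
        rcases hy with hy1 | hy0
        · obtain ⟨l, m, hlm, hLl, hLm, rfl⟩ := hy1
          rw [hπ2 l m hlm hLl hLm] at hmatch
          by_cases hon2 : onPath G2 l m s(v2, k2)
          · rw [if_pos hon2] at hmatch
            exact absurd hmatch (hvne _ _ 0 (by norm_num))
          · rw [if_neg hon2] at hmatch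
            exact absurd hmatch (hvne _ _ 0 (by norm_num))
        · right; left
          rw [Set.mem_singleton_iff] at hy0
          obtain ⟨hik, hjk⟩ := hnotkL i j hij hon
          exact ⟨⟨i, j, hij, hik, hjk, hLi, hLj, hon, rfl⟩, hy0⟩
    · rw [Set.mem_singleton_iff] at hx0
      subst hx0
      rw [hπ10] at hmatch
      rcases hy with hy1 | hy0
      · obtain ⟨l, m, hlm, hLl, hLm, rfl⟩ := hy1
        rw [hπ2 l m hlm hLl hLm] at hmatch
        by_cases hon2 : onPath G2 l m s(v2, k2)
        · rw [if_pos hon2] at hmatch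
          exact absurd hmatch (hvne _ _ 1 (by norm_num))
        · right; right
          obtain ⟨hlk, hmk⟩ := hnotkR l m hlm hon2
          exact ⟨rfl, l, m, hlm, hlk, hmk, hLl, hLm, hon2, rfl⟩
      · rw [Set.mem_singleton_iff] at hy0
        rw [hy0, hπ20] at hmatch
        exact absurd hmatch (hvne _ _ 0 (by norm_num))
  -- the affine map
  refine ⟨(phiLin v1 k1 v2 k2).toAffineMap, ?_, ?_⟩
  · -- injectivity on the toric fiber product
    have hsupp1 : ∀ (i j : V1) e, e ∉ G1.edgeSet → pathVec G1 i j e = 0 := by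
      intro i j e he
      unfold pathVec
      rw [if_neg]
      rintro ⟨p, -, hep⟩
      exact he (p.edges_subset_edgeSet hep)
    have hsupp2 : ∀ (l m : V2) e, e ∉ G2.edgeSet → pathVec G2 l m e = 0 := by
      intro l m e he
      unfold pathVec
      rw [if_neg]
      rintro ⟨p, -, hep⟩
      exact he (p.edges_subset_edgeSet hep)
    set Lset : Set ((Sym2 V1 → ℝ) × (Sym2 V2 → ℝ)) :=
      {p | p.1 s(v1, k1) = p.2 s(v2, k2) ∧ (∀ e, e ∉ G1.edgeSet → p.1 e = 0) ∧
        (∀ e, e ∉ G2.edgeSet → p.2 e = 0)} with hLdef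
    have hLconv : Convex ℝ Lset := by
      intro p hp q hq a b ha hb hab
      obtain ⟨hp1, hp2, hp3⟩ := hp
      obtain ⟨hq1, hq2, hq3⟩ := hq
      refine ⟨?_, ?_, ?_⟩
      · show a * p.1 s(v1, k1) + b * q.1 s(v1, k1) = a * p.2 s(v2, k2) + b * q.2 s(v2, k2)
        rw [hp1, hq1]
      · intro e he
        show a * p.1 e + b * q.1 e = 0
        rw [hp2 e he, hq2 e he]
        ring
      · intro e he
        show a * p.2 e + b * q.2 e = 0
        rw [hp3 e he, hq3 e he]
        ring
    have hML : {p : (Sym2 V1 → ℝ) × (Sym2 V2 → ℝ) |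
        p.1 ∈ Set.extremePoints ℝ (convexHull ℝ (pathPolytope G1 ∪ {0})) ∧
        p.2 ∈ Set.extremePoints ℝ (convexHull ℝ (pathPolytope G2 ∪ {0})) ∧
        π1 p.1 = π2 p.2} ⊆ Lset := by
      rintro ⟨x, y⟩ ⟨hx, hy, hmatch⟩
      rw [hext1] at hx
      rw [hext2] at hy
      rcases hM x y hx hy hmatch with hc1 | hc2 | hc3
      · obtain ⟨i, l, hi, hl, -, -, rfl, rfl⟩ := hc1
        refine ⟨?_, fun e he => hsupp1 _ _ e he, fun e he => hsupp2 _ _ e he⟩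
        show pathVec G1 i k1 s(v1, k1) = pathVec G2 l k2 s(v2, k2)
        unfold pathVec
        rw [if_pos (honL i hi), if_pos (honR l hl)]
      · obtain ⟨⟨i, j, -, -, -, -, -, hnon, rfl⟩, rfl⟩ := hc2
        refine ⟨?_, fun e he => hsupp1 _ _ e he, fun e he => rfl⟩
        show pathVec G1 i j s(v1, k1) = (0 : Sym2 V2 → ℝ) s(v2, k2)
        unfold pathVec
        rw [if_neg hnon]
        rfl
      · obtain ⟨rfl, l, m, -, -, -, -, -, hnon, rfl⟩ := hc3
        refine ⟨?_, fun e he => rfl, fun e he => hsupp2 _ _ e he⟩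
        show (0 : Sym2 V1 → ℝ) s(v1, k1) = pathVec G2 l m s(v2, k2)
        unfold pathVec
        rw [if_neg hnon]
        rfl
    have htfpL : tfp π1 π2 (convexHull ℝ (pathPolytope G1 ∪ {0}))
        (convexHull ℝ (pathPolytope G2 ∪ {0})) ⊆ Lset :=
      convexHull_min hML hLconv
    intro u hu w hw heq
    have hu' := htfpL hu
    have hw' := htfpL hw
    have heq' : phiFun v1 k1 v2 k2 u = phiFun v1 k1 v2 k2 w := heq
    have hbr := congrFun heq' s(mkL v1 hne1, mkR v2 hne2)
    have hbrval : ∀ z : (Sym2 V1 → ℝ) × (Sym2 V2 → ℝ),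
        phiFun v1 k1 v2 k2 z s(mkL v1 hne1, mkR v2 hne2) =
          (z.1 s(v1, k1) + z.2 s(v2, k2)) / 2 := by
      intro z
      rw [phiFun_mk]
      show (if v1 = v1 ∧ v2 = v2 then (z.1 s(v1, k1) + z.2 s(v2, k2)) / 2 else 0) = _
      rw [if_pos ⟨rfl, rfl⟩]
    rw [hbrval, hbrval] at hbr
    have hbru1 : u.1 s(v1, k1) = w.1 s(v1, k1) := by
      have h1u := hu'.1
      have h1w := hw'.1
      linarith
    have h1comp : u.1 = w.1 := by
      funext e
      induction e using Sym2.ind with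
      | _ x y =>
        by_cases hE1 : s(x, y) = s(v1, k1)
        · rw [hE1]
          exact hbru1
        · by_cases hedge : s(x, y) ∈ G1.edgeSet
          · have hadj : G1.Adj x y := (G1.mem_edgeSet).1 hedge
            have hxk : x ≠ k1 := by
              intro hh
              apply hE1
              have hyv : y = v1 := hk1.nbr_eq h1 (hh ▸ hadj)
              rw [hh, hyv, Sym2.eq_swap]
            have hyk : y ≠ k1 := by
              intro hh
              apply hE1
              have hxv : x = v1 := hk1.nbr_eq h1 (hh ▸ hadj.symm)
              rw [hh, hxv]
            have hco := congrFun heq' s(mkL x hxk, mkL y hyk)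
            rw [phiFun_mk, phiFun_mk] at hco
            exact hco
          · rw [hu'.2.1 _ hedge, hw'.2.1 _ hedge]
    have h2comp : u.2 = w.2 := by
      funext e
      induction e using Sym2.ind with
      | _ x y =>
        by_cases hE2 : s(x, y) = s(v2, k2)
        · rw [hE2]
          have h1u := hu'.1
          have h1w := hw'.1
          linarith
        · by_cases hedge : s(x, y) ∈ G2.edgeSet
          · have hadj : G2.Adj x y := (G2.mem_edgeSet).1 hedge
            have hxk : x ≠ k2 := by
              intro hh
              apply hE2
              have hyv : y = v2 := hk2.nbr_eq h2 (hh ▸ hadj)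
              rw [hh, hyv, Sym2.eq_swap]
            have hyk : y ≠ k2 := by
              intro hh
              apply hE2
              have hxv : x = v2 := hk2.nbr_eq h2 (hh ▸ hadj.symm)
              rw [hh, hxv]
            have hco := congrFun heq' s(mkR x hxk, mkR y hyk)
            rw [phiFun_mk, phiFun_mk] at hco
            exact hco
          · rw [hu'.2.2 _ hedge, hw'.2.2 _ hedge]
    exact Prod.ext h1comp h2comp
  · -- image equality
    have hMimg : (phiLin v1 k1 v2 k2).toAffineMap ''
        {p : (Sym2 V1 → ℝ) × (Sym2 V2 → ℝ) |
          p.1 ∈ Set.extremePoints ℝ (convexHull ℝ (pathPolytope G1 ∪ {0})) ∧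
          p.2 ∈ Set.extremePoints ℝ (convexHull ℝ (pathPolytope G2 ∪ {0})) ∧
          π1 p.1 = π2 p.2} =
        {x : Sym2 (GlueV V1 V2 k1 k2) → ℝ | ∃ I J, I ≠ J ∧
          IsLeaf (glueGraph G1 G2 v1 k1 v2 k2) I ∧
          IsLeaf (glueGraph G1 G2 v1 k1 v2 k2) J ∧
          x = pathVec (glueGraph G1 G2 v1 k1 v2 k2) I J} := by
      apply Set.Subset.antisymm
      · rintro _ ⟨⟨x, y⟩, ⟨hx, hy, hmatch⟩, rfl⟩
        rw [hext1] at hx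
        rw [hext2] at hy
        rcases hM x y hx hy hmatch with hc1 | hc2 | hc3
        · obtain ⟨i, l, hi, hl, hLi, hLl, rfl, rfl⟩ := hc1
          exact ⟨mkL i hi, mkR l hl, mkL_ne_mkR, (isLeaf_mkL hk1 h1 hne2 hi).2 hLi,
            (isLeaf_mkR hk2 h2 hne1 hl).2 hLl,
            phi_pair_cross hG1 hG2 hk1 h1 hk2 h2 hi hl⟩
        · obtain ⟨⟨i, j, hij, hik, hjk, hLi, hLj, hnon, rfl⟩, rfl⟩ := hc2
          exact ⟨mkL i hik, mkL j hjk, fun hc => hij (mkL_injective.1 hc),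
            (isLeaf_mkL hk1 h1 hne2 hik).2 hLi, (isLeaf_mkL hk1 h1 hne2 hjk).2 hLj,
            phi_pair_left hk1 h1 hne2 hik hjk hnon⟩
        · obtain ⟨rfl, l, m, hlm, hlk, hmk, hLl, hLm, hnon, rfl⟩ := hc3
          exact ⟨mkR l hlk, mkR m hmk, fun hc => hlm (mkR_injective.1 hc),
            (isLeaf_mkR hk2 h2 hne1 hlk).2 hLl, (isLeaf_mkR hk2 h2 hne1 hmk).2 hLm,
            phi_pair_right hk2 h2 hne1 hlk hmk hnon⟩
      · rintro x ⟨I, J, hIJ, hLI, hLJ, rfl⟩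
        obtain ⟨i', pI⟩ := I
        obtain ⟨j', pJ⟩ := J
        rcases i' with i | i' <;> rcases j' with j | j'
        · -- both left
          have hik : i ≠ k1 := fun hh => pI.1 (congrArg Sum.inl hh)
          have hjk : j ≠ k1 := fun hh => pJ.1 (congrArg Sum.inl hh)
          have hij : i ≠ j := fun hh => hIJ (Subtype.ext (congrArg Sum.inl hh))
          have hLi : IsLeaf G1 i := (isLeaf_mkL hk1 h1 hne2 hik).1 hLI
          have hLj : IsLeaf G1 j := (isLeaf_mkL hk1 h1 hne2 hjk).1 hLJ
          have hnon : ¬ onPath G1 i j s(v1, k1) := by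
            rintro ⟨p, hp, he⟩
            exact leaf_not_mem_support hk1 h1 p hp hik hjk
              (mem_support_of_mem_edge p he (Sym2.mem_iff.2 (Or.inr rfl)))
          refine ⟨(pathVec G1 i j, 0), ⟨?_, ?_, ?_⟩, ?_⟩
          · rw [hext1]
            exact Or.inl ⟨i, j, hij, hLi, hLj, rfl⟩
          · rw [hext2]
            exact Or.inr rfl
          · rw [hπ1 i j hij hLi hLj, if_neg hnon, hπ20]
          · exact phi_pair_left hk1 h1 hne2 hik hjk hnon
        · -- left, right
          have hik : i ≠ k1 := fun hh => pI.1 (congrArg Sum.inl hh)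
          have hlk : j' ≠ k2 := fun hh => pJ.2 (congrArg Sum.inr hh)
          have hLi : IsLeaf G1 i := (isLeaf_mkL hk1 h1 hne2 hik).1 hLI
          have hLl : IsLeaf G2 j' := (isLeaf_mkR hk2 h2 hne1 hlk).1 hLJ
          refine ⟨(pathVec G1 i k1, pathVec G2 j' k2), ⟨?_, ?_, ?_⟩, ?_⟩
          · rw [hext1]
            exact Or.inl ⟨i, k1, hik, hLi, hk1, rfl⟩
          · rw [hext2]
            exact Or.inl ⟨j', k2, hlk, hLl, hk2, rfl⟩
          · rw [hπ1 i k1 hik hLi hk1, if_pos (honL i hik),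
              hπ2 j' k2 hlk hLl hk2, if_pos (honR j' hlk)]
          · exact phi_pair_cross hG1 hG2 hk1 h1 hk2 h2 hik hlk
        · -- right, left
          have hlk : i' ≠ k2 := fun hh => pI.2 (congrArg Sum.inr hh)
          have hjk : j ≠ k1 := fun hh => pJ.1 (congrArg Sum.inl hh)
          have hLl : IsLeaf G2 i' := (isLeaf_mkR hk2 h2 hne1 hlk).1 hLI
          have hLj : IsLeaf G1 j := (isLeaf_mkL hk1 h1 hne2 hjk).1 hLJ
          refine ⟨(pathVec G1 j k1, pathVec G2 i' k2), ⟨?_, ?_, ?_⟩, ?_⟩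
          · rw [hext1]
            exact Or.inl ⟨j, k1, hjk, hLj, hk1, rfl⟩
          · rw [hext2]
            exact Or.inl ⟨i', k2, hlk, hLl, hk2, rfl⟩
          · rw [hπ1 j k1 hjk hLj hk1, if_pos (honL j hjk),
              hπ2 i' k2 hlk hLl hk2, if_pos (honR i' hlk)]
          · rw [pathVec_comm (G := glueGraph G1 G2 v1 k1 v2 k2)
              (⟨Sum.inr i', pI⟩ : GlueV V1 V2 k1 k2) ⟨Sum.inl j, pJ⟩]
            exact phi_pair_cross hG1 hG2 hk1 h1 hk2 h2 hjk hlk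
        · -- both right
          have hlk : i' ≠ k2 := fun hh => pI.2 (congrArg Sum.inr hh)
          have hmk : j' ≠ k2 := fun hh => pJ.2 (congrArg Sum.inr hh)
          have hlm : i' ≠ j' := fun hh => hIJ (Subtype.ext (congrArg Sum.inr hh))
          have hLl : IsLeaf G2 i' := (isLeaf_mkR hk2 h2 hne1 hlk).1 hLI
          have hLm : IsLeaf G2 j' := (isLeaf_mkR hk2 h2 hne1 hmk).1 hLJ
          have hnon : ¬ onPath G2 i' j' s(v2, k2) := by
            rintro ⟨p, hp, he⟩
            exact leaf_not_mem_support hk2 h2 p hp hlk hmk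
              (mem_support_of_mem_edge p he (Sym2.mem_iff.2 (Or.inr rfl)))
          refine ⟨(0, pathVec G2 i' j'), ⟨?_, ?_, ?_⟩, ?_⟩
          · rw [hext1]
            exact Or.inr rfl
          · rw [hext2]
            exact Or.inl ⟨i', j', hlm, hLl, hLm, rfl⟩
          · rw [hπ10, hπ2 i' j' hlm hLl hLm, if_neg hnon]
          · exact phi_pair_right hk2 h2 hne1 hlk hmk hnon
    show (phiLin v1 k1 v2 k2).toAffineMap '' tfp π1 π2 _ _ = _
    unfold tfp
    rw [AffineMap.image_convexHull, hMimg]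
    rfl
end
end

section
/- Let T = (V,E) be a tree with |V| > 2. Then the path polytope P_T has dimension |E| − |{u ∈ V : deg(u) = 2}| − 1. -/
open Classical SimpleGraph

noncomputable section

variable {V : Type*}

/-- The dimension of a polytope: the rank of the direction of its affine span. -/
def polyDim {E : Type*} [AddCommGroup E] [Module ℝ E] (P : Set E) : ℕ :=
  Module.finrank ℝ (affineSpan ℝ P).direction

section TreeLemmas

open SimpleGraph.Walk

attribute [local instance] Classical.propDecidable

variable {G : SimpleGraph V} (hG : G.IsTree)

/-- The unique path between two vertices of a tree. -/
def pa (a b : V) : G.Walk a b := (hG.existsUnique_path a b).choose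

lemma pa_isPath (a b : V) : (pa hG a b).IsPath := (hG.existsUnique_path a b).choose_spec.1

lemma pa_unique {a b : V} (p : G.Walk a b) (hp : p.IsPath) : p = pa hG a b :=
  (hG.existsUnique_path a b).choose_spec.2 p hp

lemma pa_self (a : V) : pa hG a a = Walk.nil := (pa_unique hG Walk.nil (by simp)).symm

lemma pa_reverse (a b : V) : (pa hG a b).reverse = pa hG b a :=
  pa_unique hG _ ((pa_isPath hG a b).reverse)

lemma pa_adj {a b : V} (h : G.Adj a b) : pa hG a b = Walk.cons h Walk.nil :=
  (pa_unique hG _ (by simp [Walk.cons_isPath_iff, h.ne])).symm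

lemma mem_support_pa_symm {a b x : V} (h : x ∈ (pa hG a b).support) :
    x ∈ (pa hG b a).support := by
  rw [← pa_reverse, Walk.support_reverse, List.mem_reverse]; exact h

lemma mem_edges_pa_symm {a b : V} {e : Sym2 V} (h : e ∈ (pa hG a b).edges) :
    e ∈ (pa hG b a).edges := by
  rw [← pa_reverse, Walk.edges_reverse, List.mem_reverse]; exact h

lemma pa_takeUntil {a b c : V} (hc : c ∈ (pa hG a b).support) :
    (pa hG a b).takeUntil c hc = pa hG a c :=
  pa_unique hG _ ((pa_isPath hG a b).takeUntil hc)

lemma pa_dropUntil {a b c : V} (hc : c ∈ (pa hG a b).support) :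
    (pa hG a b).dropUntil c hc = pa hG c b :=
  pa_unique hG _ ((pa_isPath hG a b).dropUntil hc)

lemma pa_split {a b c : V} (hc : c ∈ (pa hG a b).support) :
    (pa hG a c).append (pa hG c b) = pa hG a b := by
  conv_rhs => rw [← (pa hG a b).take_spec hc]
  rw [pa_takeUntil hG hc, pa_dropUntil hG hc]

/-- The indicator vector of the edges of the unique `a`–`b` path. -/
def W (a b : V) : Sym2 V → ℝ := fun e => if e ∈ (pa hG a b).edges then 1 else 0

lemma W_symm (a b : V) : W hG a b = W hG b a := by
  funext e
  simp only [W]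
  by_cases h : e ∈ (pa hG a b).edges
  · rw [if_pos h, if_pos (mem_edges_pa_symm hG h)]
  · rw [if_neg h, if_neg fun h' => h (mem_edges_pa_symm hG h')]

lemma pathVec_eq_W (a b : V) : pathVec G a b = W hG a b := by
  funext e
  simp only [pathVec, W, onPath]
  congr 1
  apply propext
  constructor
  · rintro ⟨p, hp, he⟩; rwa [pa_unique hG p hp] at he
  · intro he; exact ⟨pa hG a b, pa_isPath hG a b, he⟩

lemma W_add {a b c : V} (hc : c ∈ (pa hG a b).support) :
    W hG a b = W hG a c + W hG c b := by
  have hsplit := pa_split hG hc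
  have hnodup : ((pa hG a c).append (pa hG c b)).edges.Nodup := by
    rw [hsplit]; exact (pa_isPath hG a b).isTrail.edges_nodup
  rw [Walk.edges_append, List.nodup_append] at hnodup
  funext e
  have hmem : e ∈ (pa hG a b).edges ↔
      e ∈ (pa hG a c).edges ∨ e ∈ (pa hG c b).edges := by
    rw [← hsplit, Walk.edges_append, List.mem_append]
  simp only [W, Pi.add_apply]
  by_cases h1 : e ∈ (pa hG a c).edges
  · rw [if_pos (hmem.2 (Or.inl h1)), if_pos h1,
      if_neg (fun h2 => hnodup.2.2 _ h1 _ h2 rfl)]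
    ring
  · by_cases h2 : e ∈ (pa hG c b).edges
    · rw [if_pos (hmem.2 (Or.inr h2)), if_neg h1, if_pos h2]; ring
    · rw [if_neg (fun h => (hmem.1 h).elim h1 h2), if_neg h1, if_neg h2]; ring

/-- second vertex of the unique path: the neighbor of `a` in the direction of `b`. -/
def dirv (a b : V) : V := (pa hG a b).getVert 1

lemma pa_not_nil {a b : V} (h : a ≠ b) : ¬ (pa hG a b).Nil := Walk.not_nil_of_ne h

lemma adj_dirv {a b : V} (h : a ≠ b) : G.Adj a (dirv hG a b) :=
  (pa hG a b).adj_snd (pa_not_nil hG h)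

lemma dirv_ne {a b : V} (h : a ≠ b) : dirv hG a b ≠ a := (adj_dirv hG h).ne'

lemma dirv_adj {a b : V} (h : G.Adj a b) : dirv hG a b = b := by
  rw [dirv, pa_adj hG h, Walk.getVert_cons_succ, Walk.getVert_zero]

lemma getVert1_append {a b c : V} (p : G.Walk a b) (q : G.Walk b c) (hp : ¬ p.Nil) :
    (p.append q).getVert 1 = p.getVert 1 := by
  rw [Walk.getVert_append]
  by_cases h : 1 < p.length
  · rw [if_pos h]
  · have h1 : p.length = 1 := by
      have := Walk.not_nil_iff_lt_length.1 hp; omega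
    rw [if_neg h, h1]
    simp [Walk.getVert_zero, ← h1, Walk.getVert_length]

lemma dirv_eq {a b w : V} (hw : w ∈ (pa hG a b).support) (haw : a ≠ w) :
    dirv hG a b = dirv hG a w := by
  rw [dirv, ← pa_split hG hw, getVert1_append _ _ (pa_not_nil hG haw)]; rfl

lemma dirv_mem_support {a b : V} (h : a ≠ b) : dirv hG a b ∈ (pa hG a b).support := by
  have h1 : (pa hG a b).getVert 1 ∈ (pa hG a b).tail.support := Walk.start_mem_support _
  have h2 := Walk.cons_support_tail (pa_not_nil hG h)
  exact h2 ▸ List.mem_cons_of_mem _ h1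

lemma mem_support_of_dirv_ne {a b x : V} (ha : a ≠ x) (hb : b ≠ x)
    (hne : dirv hG x a ≠ dirv hG x b) : x ∈ (pa hG a b).support := by
  have key : ∀ w, w ∈ (pa hG a x).support → w ∈ (pa hG x b).support → w = x := by
    intro w h1 h2
    by_contra hwx
    have e1 : dirv hG x a = dirv hG x w :=
      dirv_eq hG (mem_support_pa_symm hG h1) (Ne.symm hwx)
    have e2 : dirv hG x b = dirv hG x w := dirv_eq hG h2 (Ne.symm hwx)
    exact hne (e1.trans e2.symm)
  have hpath : ((pa hG a x).append (pa hG x b)).IsPath := by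
    rw [Walk.isPath_def, Walk.support_append, List.nodup_append]
    refine ⟨(pa_isPath hG a x).support_nodup, ?_, ?_⟩
    · have := (pa_isPath hG x b).support_nodup
      rw [Walk.support_eq_cons] at this
      exact this.of_cons
    · intro w hw w' hw' hww'
      subst hww'
      have hw2 : w ∈ (pa hG x b).support := List.mem_of_mem_tail hw'
      have hx := key w hw hw2
      rw [hx] at hw'
      have hnd := (pa_isPath hG x b).support_nodup
      rw [Walk.support_eq_cons] at hnd
      exact (List.nodup_cons.1 hnd).1 hw'
  have hmem : x ∈ ((pa hG a x).append (pa hG x b)).support := by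
    rw [Walk.mem_support_append_iff]
    exact Or.inl (Walk.end_mem_support _)
  rwa [pa_unique hG _ hpath] at hmem

lemma par_or {u v : V} (h : G.Adj u v) (r : V) :
    (u ≠ r ∧ dirv hG u r = v) ∨ (v ≠ r ∧ dirv hG v r = u) := by
  by_cases hv : v ∈ (pa hG u r).support
  · left
    have hur : u ≠ r := by
      rintro rfl
      rw [pa_self hG] at hv
      simp only [Walk.support_nil, List.mem_singleton] at hv
      exact h.ne hv.symm
    exact ⟨hur, (dirv_eq hG hv h.ne).trans (dirv_adj hG h)⟩
  · right
    have hvr : v ≠ r := by rintro rfl; exact hv (Walk.end_mem_support _)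
    have hq : (Walk.cons h.symm (pa hG u r)).IsPath :=
      (Walk.cons_isPath_iff _ _).2 ⟨pa_isPath hG u r, hv⟩
    rw [dirv, ← pa_unique hG _ hq, Walk.getVert_cons_succ, Walk.getVert_zero]
    exact ⟨hvr, rfl⟩

lemma isLeaf_iff_ncard {v : V} [Fintype V] : IsLeaf G v ↔ (G.neighborSet v).ncard = 1 := by
  rw [Set.ncard_eq_one]
  constructor
  · rintro ⟨w, hw, huniq⟩
    exact ⟨w, Set.eq_singleton_iff_unique_mem.2 ⟨hw, fun y hy => huniq y hy⟩⟩
  · rintro ⟨w, hw⟩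
    refine ⟨w, ?_, fun y hy => ?_⟩
    · have : w ∈ G.neighborSet v := hw ▸ rfl
      exact this
    · have : y ∈ G.neighborSet v := hy
      rwa [hw, Set.mem_singleton_iff] at this

lemma leaf_dir [Fintype V] {x y : V} (h : G.Adj x y) :
    ∃ a, IsLeaf G a ∧ a ≠ x ∧ dirv hG x a = y := by
  classical
  set Sy : Finset V := Finset.univ.filter (fun a => a ≠ x ∧ dirv hG x a = y) with hSy
  have hyS : y ∈ Sy := by
    simp only [hSy, Finset.mem_filter, Finset.mem_univ, true_and]
    exact ⟨h.ne', dirv_adj hG h⟩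
  obtain ⟨a, haS, hmax⟩ := Sy.exists_max_image (fun a => (pa hG x a).length) ⟨y, hyS⟩
  simp only [hSy, Finset.mem_filter, Finset.mem_univ, true_and] at haS
  obtain ⟨hax, hdxa⟩ := haS
  refine ⟨a, ?_, hax, hdxa⟩
  refine ⟨dirv hG a x, adj_dirv hG hax, fun b hb => ?_⟩
  by_contra hbp
  by_cases hbsup : b ∈ (pa hG x a).support
  · -- then dirv a x = b, contradiction
    have hsplit := pa_split hG hbsup
    have hba : pa hG b a = Walk.cons hb.symm Walk.nil := pa_adj hG hb.symm
    have h2 : pa hG a x = Walk.cons hb ((pa hG x b).reverse) := by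
      rw [← pa_reverse hG x a, ← hsplit, Walk.reverse_append, hba, Walk.reverse_singleton]
      rw [Walk.cons_append, Walk.nil_append]
    apply hbp
    rw [dirv, h2, Walk.getVert_cons_succ, Walk.getVert_zero]
  · -- extend the path by b, contradicting maximality
    have hq : (Walk.cons hb.symm (pa hG x a).reverse).IsPath := by
      rw [Walk.cons_isPath_iff]
      refine ⟨(pa_isPath hG x a).reverse, ?_⟩
      rwa [Walk.support_reverse, List.mem_reverse]
    set q := (Walk.cons hb.symm (pa hG x a).reverse).reverse with hqdef
    have hqpa : q = pa hG x b := pa_unique hG q hq.reverse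
    have hlen : q.length = (pa hG x a).length + 1 := by
      simp [hqdef, Walk.length_reverse]
    have hbx : b ≠ x := by
      rintro rfl
      exact hbsup (Walk.start_mem_support _)
    have hq2 : q = (pa hG x a).append (Walk.cons hb Walk.nil) := by
      rw [hqdef, Walk.reverse_cons, Walk.reverse_reverse]
    have hdirv : dirv hG x b = y := by
      rw [dirv, ← hqpa, hq2, getVert1_append _ _ (pa_not_nil hG (Ne.symm hax))]
      exact hdxa
    have hbS : b ∈ Sy := by
      simp only [hSy, Finset.mem_filter, Finset.mem_univ, true_and]
      exact ⟨hbx, hdirv⟩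
    have := hmax b hbS
    rw [← hqpa, hlen] at this
    omega
section Rooted

variable [Fintype V] (r : V)

/-- depth of a vertex: distance to the root -/
def dep (v : V) : ℕ := (pa hG v r).length

lemma dep_lt_card (v : V) : dep hG r v < Fintype.card V := by
  have h1 := (pa hG v r).length_support
  have h2 := (pa_isPath hG v r).support_nodup.length_le_card
  simp only [dep]; omega

lemma pa_cons_par {v : V} (h : v ≠ r) :
    pa hG v r = Walk.cons (adj_dirv hG h) (pa hG (dirv hG v r) r) := by
  have hnil := pa_not_nil hG h
  have hc := (pa hG v r).cons_tail_eq hnil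
  have hpath : (pa hG v r).tail.IsPath := by
    have hp := pa_isPath hG v r
    rw [← hc, Walk.cons_isPath_iff] at hp
    exact hp.1
  have ht : (pa hG v r).tail = pa hG (dirv hG v r) r := pa_unique hG _ hpath
  rw [← hc, ht]
  rfl

lemma dep_par {v : V} (h : v ≠ r) : dep hG r v = dep hG r (dirv hG v r) + 1 := by
  simp only [dep]
  rw [pa_cons_par hG r h, Walk.length_cons]

lemma dep_le_of_mem {v w : V} (hw : w ∈ (pa hG v r).support) :
    dep hG r w ≤ dep hG r v := by
  have := pa_split hG hw
  have hl := congrArg Walk.length this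
  rw [Walk.length_append] at hl
  simp only [dep]; omega

lemma par_ne_swap {u v : V} (hu : u ≠ r) (hv : v ≠ r) :
    ¬ (dirv hG u r = v ∧ dirv hG v r = u) := by
  rintro ⟨h1, h2⟩
  have d1 := dep_par hG r hu
  have d2 := dep_par hG r hv
  rw [h1] at d1; rw [h2] at d2
  omega

/-- the edge from a (non-root) vertex to its parent -/
def up (v : V) : Sym2 V := s(v, dirv hG v r)

lemma up_mem_edgeSet {v : V} (h : v ≠ r) : up hG r v ∈ G.edgeSet := by
  rw [up, SimpleGraph.mem_edgeSet]
  exact adj_dirv hG h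

lemma up_inj {v w : V} (hv : v ≠ r) (hw : w ≠ r) (h : up hG r v = up hG r w) : v = w := by
  rw [up, up, Sym2.eq_iff] at h
  rcases h with ⟨h1, _⟩ | ⟨h1, h2⟩
  · exact h1
  · exact ((par_ne_swap hG r hw hv) ⟨h1.symm, h2⟩).elim

lemma edge_eq_up {e : Sym2 V} (he : e ∈ G.edgeSet) : ∃ v, v ≠ r ∧ e = up hG r v := by
  induction e with
  | _ x y =>
    rw [SimpleGraph.mem_edgeSet] at he
    rcases par_or hG he r with ⟨hx, hd⟩ | ⟨hy, hd⟩
    · exact ⟨x, hx, by rw [up, hd]⟩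
    · exact ⟨y, hy, by rw [up, hd, Sym2.eq_swap]⟩

lemma adj_iff_par {u v : V} : G.Adj u v ↔
    ((u ≠ r ∧ dirv hG u r = v) ∨ (v ≠ r ∧ dirv hG v r = u)) := by
  constructor
  · intro h; exact par_or hG h r
  · rintro (⟨hu, hd⟩ | ⟨hv, hd⟩)
    · exact hd ▸ adj_dirv hG hu
    · exact (hd ▸ adj_dirv hG hv).symm

lemma exists_child {u : V} (hu : u ≠ r) (h2 : 2 ≤ (G.neighborSet u).ncard) :
    ∃ v, v ≠ r ∧ dirv hG v r = u := by
  classical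
  rw [Set.ncard_eq_toFinset_card'] at h2
  obtain ⟨w, hw, hwne⟩ := Finset.exists_mem_ne
    (s := (G.neighborSet u).toFinset) (by omega) (dirv hG u r)
  rw [Set.mem_toFinset, SimpleGraph.mem_neighborSet] at hw
  rcases par_or hG hw r with ⟨_, hd⟩ | ⟨hv, hd⟩
  · exact absurd hd.symm hwne
  · exact ⟨w, hv, hd⟩

lemma child_unique {u v w : V} (hu : u ≠ r) (h2 : (G.neighborSet u).ncard = 2)
    (hv : v ≠ r) (hdv : dirv hG v r = u) (hw : w ≠ r) (hdw : dirv hG w r = u) : v = w := by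
  classical
  by_contra hne
  have hvp : v ≠ dirv hG u r := fun h => par_ne_swap hG r hu hv ⟨h.symm, hdv⟩
  have hwp : w ≠ dirv hG u r := fun h => par_ne_swap hG r hu hw ⟨h.symm, hdw⟩
  have hsub : ({dirv hG u r, v, w} : Finset V) ⊆ (G.neighborSet u).toFinset := by
    intro x hx
    simp only [Finset.mem_insert, Finset.mem_singleton] at hx
    rw [Set.mem_toFinset, SimpleGraph.mem_neighborSet]
    rcases hx with rfl | rfl | rfl
    · exact adj_dirv hG hu
    · exact (hdv ▸ adj_dirv hG hv).symm
    · exact (hdw ▸ adj_dirv hG hw).symm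
  have hcard : ({dirv hG u r, v, w} : Finset V).card = 3 := by
    rw [Finset.card_insert_of_notMem (by simp [hvp.symm, hwp.symm]),
      Finset.card_insert_of_notMem (by simp [hne]), Finset.card_singleton]
  have := Finset.card_le_card hsub
  rw [hcard, ← Set.ncard_eq_toFinset_card'] at this
  omega

lemma card_R_add_card_V2 (hr : IsLeaf G r) :
    Set.ncard {e : Sym2 V | ∃ v, v ≠ r ∧ e = up hG r v ∧
        (G.neighborSet (dirv hG v r)).ncard ≠ 2}
      + Set.ncard {u : V | (G.neighborSet u).ncard = 2} = G.edgeSet.ncard := by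
  classical
  set R := {e : Sym2 V | ∃ v, v ≠ r ∧ e = up hG r v ∧
      (G.neighborSet (dirv hG v r)).ncard ≠ 2} with hR
  set V2 := {u : V | (G.neighborSet u).ncard = 2} with hV2
  set A := {v : V | v ≠ r ∧ (G.neighborSet (dirv hG v r)).ncard = 2} with hA
  have hrdeg : (G.neighborSet r).ncard = 1 := (isLeaf_iff_ncard).1 hr
  have hRE : R ⊆ G.edgeSet := by
    rintro e ⟨v, hv, rfl, _⟩
    exact up_mem_edgeSet hG r hv
  have hdiff : G.edgeSet \ R = up hG r '' A := by
    ext e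
    constructor
    · rintro ⟨he, heR⟩
      obtain ⟨v, hv, rfl⟩ := edge_eq_up hG r he
      refine ⟨v, ⟨hv, ?_⟩, rfl⟩
      by_contra h2
      exact heR ⟨v, hv, rfl, h2⟩
    · rintro ⟨v, ⟨hv, h2⟩, rfl⟩
      refine ⟨up_mem_edgeSet hG r hv, ?_⟩
      rintro ⟨w, hw, hup, h2'⟩
      rw [up_inj hG r hv hw hup] at h2
      exact h2' h2
  have himg : (up hG r '' A).ncard = A.ncard := by
    apply Set.ncard_image_of_injOn
    intro v hv w hw h
    exact up_inj hG r hv.1 hw.1 h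
  have hAV2 : (fun v => dirv hG v r) '' A = V2 := by
    ext u
    constructor
    · rintro ⟨v, ⟨hv, h2⟩, rfl⟩; exact h2
    · intro hu
      have hur : u ≠ r := by
        rintro rfl
        rw [hV2, Set.mem_setOf_eq, hrdeg] at hu
        exact absurd hu (by omega)
      obtain ⟨v, hv, hdv⟩ := exists_child hG r hur (by have h2u : (G.neighborSet u).ncard = 2 := hu; omega)
      exact ⟨v, ⟨hv, by rw [hdv]; exact hu⟩, hdv⟩
  have hAinj : Set.InjOn (fun v => dirv hG v r) A := by
    intro v hv w hw h
    simp only at h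
    obtain ⟨hv1, hv2⟩ := hv
    obtain ⟨hw1, _⟩ := hw
    have hu : dirv hG v r ≠ r := by
      intro hvr
      rw [hvr, hrdeg] at hv2
      omega
    exact child_unique hG r hu hv2 hv1 rfl hw1 h.symm
  have hcardA : A.ncard = V2.ncard := by
    rw [← hAV2]
    exact (Set.ncard_image_of_injOn hAinj).symm
  have := Set.ncard_diff_add_ncard_of_subset hRE (Set.toFinite _)
  rw [hdiff, himg, hcardA] at this
  omega

/-- Follow the chain of degree-2 vertices downward (away from the root). -/
def bot (v : V) : V :=
  if h : (G.neighborSet v).ncard = 2 ∧ v ≠ r then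
    bot (exists_child hG r h.2 (le_of_eq h.1.symm)).choose
  else v
termination_by Fintype.card V - dep hG r v
decreasing_by
  have hc := (exists_child hG r h.2 (le_of_eq h.1.symm)).choose_spec
  have hd : dep hG r (exists_child hG r h.2 (le_of_eq h.1.symm)).choose
      = dep hG r v + 1 := by
    have := dep_par hG r hc.1
    rw [hc.2] at this
    exact this
  have := dep_lt_card hG r v
  omega

lemma bot_spec : ∀ n : ℕ, ∀ v : V, v ≠ r → Fintype.card V - dep hG r v ≤ n →
    (bot hG r v ≠ r) ∧ ((G.neighborSet (bot hG r v)).ncard ≠ 2) ∧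
    (∀ w ∈ (pa hG v (bot hG r v)).support, dep hG r v ≤ dep hG r w) ∧
    (∃ h : G.Adj (dirv hG v r) v,
        pa hG (dirv hG v r) (bot hG r v) = Walk.cons h (pa hG v (bot hG r v))) ∧
    (∀ f ∈ (pa hG (dirv hG v r) (bot hG r v)).edges, f = up hG r v ∨
        ∃ w, w ≠ r ∧ f = up hG r w ∧ (G.neighborSet (dirv hG w r)).ncard = 2) := by
  intro n
  induction n with
  | zero =>
    intro v hv hn
    have := dep_lt_card hG r v
    omega
  | succ n IH =>
    intro v hv hn
    by_cases h2 : (G.neighborSet v).ncard = 2 ∧ v ≠ r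
    · -- recursive case
      have hbot : bot hG r v = bot hG r (exists_child hG r h2.2 (le_of_eq h2.1.symm)).choose := by
        rw [bot, dif_pos h2]
      have hc := (exists_child hG r h2.2 (le_of_eq h2.1.symm)).choose_spec
      generalize hcc : (exists_child hG r h2.2 (le_of_eq h2.1.symm)).choose = c at hbot hc
      clear hcc
      obtain ⟨hcr, hdv⟩ := hc
      have hdepc : dep hG r c = dep hG r v + 1 := by
        have := dep_par hG r hcr
        rw [hdv] at this
        exact this
      have hdvlt := dep_lt_card hG r v
      obtain ⟨ih1, ih2, ih3, ⟨hadj, hB⟩, ih5⟩ := IH c hcr (by omega)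
      subst hdv
      set v := dirv hG c r with hvdef
      rw [hbot]
      refine ⟨ih1, ih2, ?_, ?_, ?_⟩
      · -- depth bound
        intro w hw
        rw [hB, Walk.support_cons, List.mem_cons] at hw
        rcases hw with rfl | hw
        · exact le_refl _
        · have := ih3 w hw
          omega
      · -- cons decomposition
        have hvr : v ≠ r := h2.2
        set z := bot hG r c with hz
        have hnot : dirv hG v r ∉ (pa hG v z).support := by
          intro hmem
          rw [hB, Walk.support_cons, List.mem_cons] at hmem
          rcases hmem with hmem | hmem
          · have hdd := dep_par hG r hvr
            rw [hmem] at hdd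
            omega
          · have := ih3 _ hmem
            have hdd := dep_par hG r hvr
            omega
        have hadj2 : G.Adj (dirv hG v r) v := (adj_dirv hG hvr).symm
        have hpath : (Walk.cons hadj2 (pa hG v z)).IsPath :=
          (Walk.cons_isPath_iff _ _).2 ⟨pa_isPath hG v z, hnot⟩
        exact ⟨hadj2, (pa_unique hG _ hpath).symm⟩
      · -- edges classification
        intro f hf
        have hvr : v ≠ r := h2.2
        set z := bot hG r c with hz
        -- first rewrite pa (dirv v r) z as cons
        obtain ⟨hadj2, hB2⟩ : ∃ h : G.Adj (dirv hG v r) v,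
            pa hG (dirv hG v r) z = Walk.cons h (pa hG v z) := by
          have hnot : dirv hG v r ∉ (pa hG v z).support := by
            intro hmem
            rw [hB, Walk.support_cons, List.mem_cons] at hmem
            rcases hmem with hmem | hmem
            · have hdd := dep_par hG r hvr
              rw [hmem] at hdd
              omega
            · have := ih3 _ hmem
              have hdd := dep_par hG r hvr
              omega
          have hadj2 : G.Adj (dirv hG v r) v := (adj_dirv hG hvr).symm
          have hpath : (Walk.cons hadj2 (pa hG v z)).IsPath :=
            (Walk.cons_isPath_iff _ _).2 ⟨pa_isPath hG v z, hnot⟩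
          exact ⟨hadj2, (pa_unique hG _ hpath).symm⟩
        rw [hB2, Walk.edges_cons, List.mem_cons] at hf
        rcases hf with hf | hf
        · left
          rw [hf, up, Sym2.eq_swap]
        · rcases ih5 f hf with hfc | ⟨w, hw1, hw2, hw3⟩
          · right
            exact ⟨c, hcr, hfc, h2.1⟩
          · right
            exact ⟨w, hw1, hw2, hw3⟩
    · -- base case
      have hbot : bot hG r v = v := by
        rw [bot, dif_neg h2]
      rw [hbot]
      have hdeg : (G.neighborSet v).ncard ≠ 2 := fun h => h2 ⟨h, hv⟩
      refine ⟨hv, hdeg, ?_, ?_, ?_⟩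
      · intro w hw
        rw [pa_self, Walk.support_nil, List.mem_singleton] at hw
        exact le_of_eq (by rw [hw])
      · have hadj2 : G.Adj (dirv hG v r) v := (adj_dirv hG hv).symm
        refine ⟨hadj2, ?_⟩
        rw [pa_self]
        exact pa_adj hG hadj2
      · intro f hf
        rw [pa_adj hG (adj_dirv hG hv).symm, Walk.edges_cons, Walk.edges_nil,
          List.mem_singleton] at hf
        left
        rw [hf, up, Sym2.eq_swap]

lemma bot_props {v : V} (hv : v ≠ r) :
    (bot hG r v ≠ r) ∧ ((G.neighborSet (bot hG r v)).ncard ≠ 2) ∧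
    (∀ w ∈ (pa hG v (bot hG r v)).support, dep hG r v ≤ dep hG r w) ∧
    (∃ h : G.Adj (dirv hG v r) v,
        pa hG (dirv hG v r) (bot hG r v) = Walk.cons h (pa hG v (bot hG r v))) ∧
    (∀ f ∈ (pa hG (dirv hG v r) (bot hG r v)).edges, f = up hG r v ∨
        ∃ w, w ≠ r ∧ f = up hG r w ∧ (G.neighborSet (dirv hG w r)).ncard = 2) :=
  bot_spec hG r (Fintype.card V - dep hG r v) v hv le_rfl

lemma dirv_x_bot {v : V} (hv : v ≠ r) :
    dirv hG (dirv hG v r) (bot hG r v) = v := by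
  obtain ⟨hadj, hB⟩ := (bot_props hG r hv).2.2.2.1
  rw [dirv, hB, Walk.getVert_cons_succ, Walk.getVert_zero]

lemma dep_le_bot {v : V} (hv : v ≠ r) : dep hG r v ≤ dep hG r (bot hG r v) :=
  (bot_props hG r hv).2.2.1 _ (Walk.end_mem_support _)

lemma par_ne_bot {v : V} (hv : v ≠ r) : dirv hG v r ≠ bot hG r v := by
  intro h
  have h1 := dep_le_bot hG r hv
  have h2 := dep_par hG r hv
  rw [← h] at h1
  omega

lemma par_mem_support_bot_root {v : V} (hv : v ≠ r) :
    dirv hG v r ∈ (pa hG (bot hG r v) r).support := by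
  set x := dirv hG v r with hx
  set z := bot hG r v with hz
  obtain ⟨hadj, hB⟩ := (bot_props hG r hv).2.2.2.1
  have hdepth := (bot_props hG r hv).2.2.1
  have hxz : x ≠ z := par_ne_bot hG r hv
  have hdpar := dep_par hG r hv
  rw [← hx] at hdpar
  -- the walk (pa z x).append (pa x r) is a path
  have key : ∀ w, w ∈ (pa hG z x).support → w ∈ (pa hG x r).support → w = x := by
    intro w hw1 hw2
    have hw1' : w ∈ (pa hG x z).support := mem_support_pa_symm hG hw1
    rw [hB, Walk.support_cons, List.mem_cons] at hw1'
    rcases hw1' with rfl | hw1'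
    · rfl
    · have hd1 := hdepth w hw1'
      have hd2 := dep_le_of_mem hG r hw2
      omega
  have hpath : ((pa hG z x).append (pa hG x r)).IsPath := by
    rw [Walk.isPath_def, Walk.support_append, List.nodup_append]
    refine ⟨(pa_isPath hG z x).support_nodup, ?_, ?_⟩
    · have hnd := (pa_isPath hG x r).support_nodup
      rw [Walk.support_eq_cons] at hnd
      exact hnd.of_cons
    · intro w hw w' hw' hww'
      subst hww'
      have hw2 : w ∈ (pa hG x r).support := List.mem_of_mem_tail hw'
      have hwx := key w hw hw2
      rw [hwx] at hw'
      have hnd := (pa_isPath hG x r).support_nodup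
      rw [Walk.support_eq_cons] at hnd
      exact (List.nodup_cons.1 hnd).1 hw'
  have hmem : x ∈ ((pa hG z x).append (pa hG x r)).support := by
    rw [Walk.mem_support_append_iff]
    exact Or.inl (Walk.end_mem_support _)
  rwa [pa_unique hG _ hpath] at hmem

lemma dirv_bot_root {v : V} (hv : v ≠ r) :
    dirv hG (bot hG r v) r = dirv hG (bot hG r v) (dirv hG v r) :=
  dirv_eq hG (par_mem_support_bot_root hG r hv) (Ne.symm (par_ne_bot hG r hv))

lemma pick2 {x y0 : V} (h2 : (G.neighborSet x).ncard ≠ 2)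
    (h1 : (G.neighborSet x).ncard ≠ 1) (h : G.Adj x y0) :
    ∃ y1 y2, G.Adj x y1 ∧ G.Adj x y2 ∧ y1 ≠ y2 ∧ y1 ≠ y0 ∧ y2 ≠ y0 := by
  classical
  rw [Set.ncard_eq_toFinset_card'] at h2 h1
  have hy0 : y0 ∈ (G.neighborSet x).toFinset := by
    rw [Set.mem_toFinset]; exact h
  have hcard : 3 ≤ (G.neighborSet x).toFinset.card := by
    have hpos : 0 < (G.neighborSet x).toFinset.card := Finset.card_pos.2 ⟨y0, hy0⟩
    omega
  have herase : 1 < ((G.neighborSet x).toFinset.erase y0).card := by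
    have := Finset.card_erase_of_mem hy0
    omega
  obtain ⟨y1, hy1, y2, hy2, hne⟩ := Finset.one_lt_card.1 herase
  rw [Finset.mem_erase, Set.mem_toFinset] at hy1 hy2
  exact ⟨y1, y2, hy1.2, hy2.2, hne, hy1.1, hy2.1⟩

lemma W_mem_S {i j : V} (hi : IsLeaf G i) (hj : IsLeaf G j) (hij : i ≠ j) :
    W hG i j ∈ {x : Sym2 V → ℝ | ∃ i j : V, i ≠ j ∧ IsLeaf G i ∧ IsLeaf G j ∧ x = pathVec G i j} :=
  ⟨i, j, hij, hi, hj, (pathVec_eq_W hG i j).symm⟩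

lemma chain_mem_span {v : V} (hv : v ≠ r)
    (hx2 : (G.neighborSet (dirv hG v r)).ncard ≠ 2) :
    W hG (dirv hG v r) (bot hG r v) ∈ Submodule.span ℝ
      {x : Sym2 V → ℝ | ∃ i j : V, i ≠ j ∧ IsLeaf G i ∧ IsLeaf G j ∧ x = pathVec G i j} := by
  classical
  set S := {x : Sym2 V → ℝ | ∃ i j : V, i ≠ j ∧ IsLeaf G i ∧ IsLeaf G j ∧ x = pathVec G i j}
    with hS
  set x := dirv hG v r with hxdef
  set z := bot hG r v with hzdef
  have hz2 : (G.neighborSet z).ncard ≠ 2 := (bot_props hG r hv).2.1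
  have hxz : x ≠ z := par_ne_bot hG r hv
  have hzx : z ≠ x := Ne.symm hxz
  have hdxz : dirv hG x z = v := dirv_x_bot hG r hv
  have hdzr : dirv hG z r = dirv hG z x := dirv_bot_root hG r hv
  have hadjxv : G.Adj x v := (adj_dirv hG hv).symm
  have hadjzx : G.Adj z (dirv hG z x) := adj_dirv hG hzx
  by_cases hx1 : (G.neighborSet x).ncard = 1
  · have hlx : IsLeaf G x := (isLeaf_iff_ncard).2 hx1
    by_cases hz1 : (G.neighborSet z).ncard = 1
    · -- Case A : both leaves
      exact Submodule.subset_span (W_mem_S hG hlx ((isLeaf_iff_ncard).2 hz1) hxz)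
    · -- Case B : x leaf, z branching
      obtain ⟨y1, y2, ha1, ha2, h12, h10, h20⟩ := pick2 hz2 hz1 hadjzx
      obtain ⟨a1, hla1, ha1z, hd1⟩ := leaf_dir hG ha1
      obtain ⟨a2, hla2, ha2z, hd2⟩ := leaf_dir hG ha2
      have hdne1 : dirv hG z x ≠ dirv hG z a1 := by rw [hd1]; exact fun h => h10 h.symm
      have hdne2 : dirv hG z x ≠ dirv hG z a2 := by rw [hd2]; exact fun h => h20 h.symm
      have hdne12 : dirv hG z a1 ≠ dirv hG z a2 := by rw [hd1, hd2]; exact h12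
      have hxa1 : x ≠ a1 := fun h => hdne1 (by rw [h])
      have hxa2 : x ≠ a2 := fun h => hdne2 (by rw [h])
      have ha12 : a1 ≠ a2 := fun h => hdne12 (by rw [h])
      have hm1 : z ∈ (pa hG x a1).support := mem_support_of_dirv_ne hG hzx.symm ha1z hdne1
      have hm2 : z ∈ (pa hG x a2).support := mem_support_of_dirv_ne hG hzx.symm ha2z hdne2
      have hm3 : z ∈ (pa hG a1 a2).support := mem_support_of_dirv_ne hG ha1z ha2z hdne12
      have e1 := W_add hG hm1
      have e2 := W_add hG hm2
      have e3 := W_add hG hm3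
      have heq : W hG x z = (2⁻¹ : ℝ) • (W hG x a1 + W hG x a2 - W hG a1 a2) := by
        funext e
        have c1 := congrFun e1 e
        have c2 := congrFun e2 e
        have c3 := congrFun e3 e
        have s1 := congrFun (W_symm hG z a1) e
        simp only [Pi.add_apply] at c1 c2 c3
        simp only [Pi.smul_apply, Pi.add_apply, Pi.sub_apply, smul_eq_mul]
        rw [c1, c2, c3] ; rw [s1]; ring
      rw [heq]
      refine Submodule.smul_mem _ _ (Submodule.sub_mem _ (Submodule.add_mem _ ?_ ?_) ?_)
      · exact Submodule.subset_span (W_mem_S hG hlx hla1 hxa1)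
      · exact Submodule.subset_span (W_mem_S hG hlx hla2 hxa2)
      · exact Submodule.subset_span (W_mem_S hG hla1 hla2 ha12)
  · by_cases hz1 : (G.neighborSet z).ncard = 1
    · -- Case C : z leaf, x branching
      have hlz : IsLeaf G z := (isLeaf_iff_ncard).2 hz1
      have hadjxv' : G.Adj x v := hadjxv
      obtain ⟨y1, y2, ha1, ha2, h12, h10, h20⟩ := pick2 hx2 hx1 hadjxv
      obtain ⟨a1, hla1, ha1x, hd1⟩ := leaf_dir hG ha1
      obtain ⟨a2, hla2, ha2x, hd2⟩ := leaf_dir hG ha2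
      have hdne1 : dirv hG x a1 ≠ dirv hG x z := by rw [hd1, hdxz]; exact h10
      have hdne2 : dirv hG x a2 ≠ dirv hG x z := by rw [hd2, hdxz]; exact h20
      have hdne12 : dirv hG x a1 ≠ dirv hG x a2 := by rw [hd1, hd2]; exact h12
      have hza1 : a1 ≠ z := fun h => hdne1 (by rw [h])
      have hza2 : a2 ≠ z := fun h => hdne2 (by rw [h])
      have ha12 : a1 ≠ a2 := fun h => hdne12 (by rw [h])
      have hm1 : x ∈ (pa hG a1 z).support := mem_support_of_dirv_ne hG ha1x hxz.symm hdne1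
      have hm2 : x ∈ (pa hG a2 z).support := mem_support_of_dirv_ne hG ha2x hxz.symm hdne2
      have hm3 : x ∈ (pa hG a1 a2).support := mem_support_of_dirv_ne hG ha1x ha2x hdne12
      have e1 := W_add hG hm1
      have e2 := W_add hG hm2
      have e3 := W_add hG hm3
      have heq : W hG x z = (2⁻¹ : ℝ) • (W hG a1 z + W hG a2 z - W hG a1 a2) := by
        funext e
        have c1 := congrFun e1 e
        have c2 := congrFun e2 e
        have c3 := congrFun e3 e
        have s1 := congrFun (W_symm hG a2 x) e
        simp only [Pi.add_apply] at c1 c2 c3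
        simp only [Pi.smul_apply, Pi.add_apply, Pi.sub_apply, smul_eq_mul]
        rw [c1, c2, c3]; rw [← s1]; ring
      rw [heq]
      refine Submodule.smul_mem _ _ (Submodule.sub_mem _ (Submodule.add_mem _ ?_ ?_) ?_)
      · exact Submodule.subset_span (W_mem_S hG hla1 hlz hza1)
      · exact Submodule.subset_span (W_mem_S hG hla2 hlz hza2)
      · exact Submodule.subset_span (W_mem_S hG hla1 hla2 ha12)
    · -- Case D : both branching
      obtain ⟨y1, y2, ha1, ha2, h12, h10, h20⟩ := pick2 hx2 hx1 hadjxv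
      obtain ⟨y3, y4, hb1, hb2, h34, h30, h40⟩ := pick2 hz2 hz1 hadjzx
      obtain ⟨a1, hla1, ha1x, hda1⟩ := leaf_dir hG ha1
      obtain ⟨a2, hla2, ha2x, hda2⟩ := leaf_dir hG ha2
      obtain ⟨b1, hlb1, hb1z, hdb1⟩ := leaf_dir hG hb1
      obtain ⟨b2, hlb2, hb2z, hdb2⟩ := leaf_dir hG hb2
      -- z lies on the path from x to each b, hence dirv x b = v
      have hzb1 : z ∈ (pa hG x b1).support := by
        refine mem_support_of_dirv_ne hG hzx.symm hb1z ?_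
        rw [hdb1]; exact fun h => h30 h.symm
      have hzb2 : z ∈ (pa hG x b2).support := by
        refine mem_support_of_dirv_ne hG hzx.symm hb2z ?_
        rw [hdb2]; exact fun h => h40 h.symm
      have hb1x : b1 ≠ x := by
        intro h
        rw [h] at hzb1
        rw [pa_self, Walk.support_nil, List.mem_singleton] at hzb1
        exact hzx hzb1
      have hb2x : b2 ≠ x := by
        intro h
        rw [h] at hzb2
        rw [pa_self, Walk.support_nil, List.mem_singleton] at hzb2
        exact hzx hzb2
      have hdxb1 : dirv hG x b1 = v := by
        rw [dirv_eq hG hzb1 hxz, hdxz]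
      have hdxb2 : dirv hG x b2 = v := by
        rw [dirv_eq hG hzb2 hxz, hdxz]
      have hdnea1b1 : dirv hG x a1 ≠ dirv hG x b1 := by rw [hda1, hdxb1]; exact h10
      have hdnea2b2 : dirv hG x a2 ≠ dirv hG x b2 := by rw [hda2, hdxb2]; exact h20
      have hdnea12 : dirv hG x a1 ≠ dirv hG x a2 := by rw [hda1, hda2]; exact h12
      have hdneb12 : dirv hG z b1 ≠ dirv hG z b2 := by rw [hdb1, hdb2]; exact h34
      have ha1b1 : a1 ≠ b1 := fun h => hdnea1b1 (by rw [h])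
      have ha2b2 : a2 ≠ b2 := fun h => hdnea2b2 (by rw [h])
      have ha12 : a1 ≠ a2 := fun h => hdnea12 (by rw [h])
      have hb12 : b1 ≠ b2 := fun h => hdneb12 (by rw [h])
      have hm1 : x ∈ (pa hG a1 b1).support := mem_support_of_dirv_ne hG ha1x hb1x hdnea1b1
      have hm2 : x ∈ (pa hG a2 b2).support := mem_support_of_dirv_ne hG ha2x hb2x hdnea2b2
      have hm3 : x ∈ (pa hG a1 a2).support := mem_support_of_dirv_ne hG ha1x ha2x hdnea12
      have hm4 : z ∈ (pa hG b1 b2).support := mem_support_of_dirv_ne hG hb1z hb2z hdneb12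
      have e1 := W_add hG hm1  -- W a1 b1 = W a1 x + W x b1
      have e1' := W_add hG hzb1  -- W x b1 = W x z + W z b1
      have e2 := W_add hG hm2
      have e2' := W_add hG hzb2
      have e3 := W_add hG hm3  -- W a1 a2 = W a1 x + W x a2
      have e4 := W_add hG hm4  -- W b1 b2 = W b1 z + W z b2
      have heq : W hG x z = (2⁻¹ : ℝ) •
          (W hG a1 b1 + W hG a2 b2 - W hG a1 a2 - W hG b1 b2) := by
        funext e
        have c1 := congrFun e1 e
        have c1' := congrFun e1' e
        have c2 := congrFun e2 e
        have c2' := congrFun e2' e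
        have c3 := congrFun e3 e
        have c4 := congrFun e4 e
        have s1 := congrFun (W_symm hG x a2) e
        have s2 := congrFun (W_symm hG z b1) e
        simp only [Pi.add_apply] at c1 c1' c2 c2' c3 c4
        simp only [Pi.smul_apply, Pi.add_apply, Pi.sub_apply, smul_eq_mul]
        rw [c1, c2, c3, c4, c1', c2', s1, ← s2]; ring
      rw [heq]
      refine Submodule.smul_mem _ _ (Submodule.sub_mem _ (Submodule.sub_mem _
        (Submodule.add_mem _ ?_ ?_) ?_) ?_)
      · exact Submodule.subset_span (W_mem_S hG hla1 hlb1 ha1b1)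
      · exact Submodule.subset_span (W_mem_S hG hla2 hlb2 ha2b2)
      · exact Submodule.subset_span (W_mem_S hG hla1 hla2 ha12)
      · exact Submodule.subset_span (W_mem_S hG hlb1 hlb2 hb12)

end Rooted
section UpperBound

variable [Fintype V]

lemma first_edge_mem {a b : V} (h : a ≠ b) : s(a, dirv hG a b) ∈ (pa hG a b).edges := by
  have hc := (pa hG a b).cons_tail_eq (pa_not_nil hG h)
  rw [← hc, Walk.edges_cons]
  exact List.mem_cons_self

lemma internal_dirs {i j u : V} (hu : u ∈ (pa hG i j).support) (hui : u ≠ i) (huj : u ≠ j) :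
    dirv hG u i ≠ dirv hG u j ∧ s(u, dirv hG u i) ∈ (pa hG i j).edges ∧
      s(u, dirv hG u j) ∈ (pa hG i j).edges := by
  have hsplit := pa_split hG hu
  refine ⟨?_, ?_, ?_⟩
  · intro heq
    have hy1 : dirv hG u i ∈ (pa hG i u).support :=
      mem_support_pa_symm hG (dirv_mem_support hG hui)
    have hy2 : dirv hG u i ∈ (pa hG u j).support := heq ▸ dirv_mem_support hG huj
    have hyu : dirv hG u i ≠ u := dirv_ne hG hui
    have hnd := (pa_isPath hG i j).support_nodup
    rw [← hsplit, Walk.support_append, List.nodup_append] at hnd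
    rw [Walk.support_eq_cons, List.mem_cons] at hy2
    rcases hy2 with hy2 | hy2
    · exact hyu hy2
    · exact hnd.2.2 _ hy1 _ hy2 rfl
  · rw [← hsplit, Walk.edges_append]
    exact List.mem_append_left _ (mem_edges_pa_symm hG (first_edge_mem hG hui))
  · rw [← hsplit, Walk.edges_append]
    exact List.mem_append_right _ (first_edge_mem hG huj)

lemma two_of_deg2 {u a b c : V} (h2 : (G.neighborSet u).ncard = 2) (ha : G.Adj u a)
    (hb : G.Adj u b) (hab : a ≠ b) (hc : G.Adj u c) : c = a ∨ c = b := by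
  classical
  by_contra hcc
  push_neg at hcc
  have hsub : ({a, b, c} : Finset V) ⊆ (G.neighborSet u).toFinset := by
    intro x hx
    simp only [Finset.mem_insert, Finset.mem_singleton] at hx
    rw [Set.mem_toFinset, SimpleGraph.mem_neighborSet]
    rcases hx with rfl | rfl | rfl
    · exact ha
    · exact hb
    · exact hc
  have hcard : ({a, b, c} : Finset V).card = 3 := by
    rw [Finset.card_insert_of_notMem (by simp [hab, hcc.1.symm]),
      Finset.card_insert_of_notMem (by simp [hcc.2.symm]), Finset.card_singleton]
  have := Finset.card_le_card hsub
  rw [hcard, ← Set.ncard_eq_toFinset_card'] at this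
  omega

lemma W_deg2 {i j u v' w' : V} (hi : IsLeaf G i) (hj : IsLeaf G j)
    (h2 : (G.neighborSet u).ncard = 2) (hv : G.Adj u v') (hw : G.Adj u w') :
    W hG i j s(u, v') = W hG i j s(u, w') := by
  by_cases hvw : v' = w'
  · rw [hvw]
  have hui : u ≠ i := by
    rintro rfl
    rw [isLeaf_iff_ncard] at hi
    omega
  have huj : u ≠ j := by
    rintro rfl
    rw [isLeaf_iff_ncard] at hj
    omega
  by_cases hu : u ∈ (pa hG i j).support
  · obtain ⟨hdne, hm1, hm2⟩ := internal_dirs hG hu hui huj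
    have hd1 : G.Adj u (dirv hG u i) := adj_dirv hG hui
    have hd2 : G.Adj u (dirv hG u j) := adj_dirv hG huj
    have hv' := two_of_deg2 h2 hd1 hd2 hdne hv
    have hw' := two_of_deg2 h2 hd1 hd2 hdne hw
    rcases hv' with rfl | rfl <;> rcases hw' with rfl | rfl
    · exact absurd rfl hvw
    · simp only [W, if_pos hm1, if_pos hm2]
    · simp only [W, if_pos hm2, if_pos hm1]
    · exact absurd rfl hvw
  · have hnv : s(u, v') ∉ (pa hG i j).edges := by
      intro hmem
      exact hu (Walk.fst_mem_support_of_mem_edges _ hmem)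
    have hnw : s(u, w') ∉ (pa hG i j).edges := by
      intro hmem
      exact hu (Walk.fst_mem_support_of_mem_edges _ hmem)
    simp only [W, if_neg hnv, if_neg hnw]

end UpperBound

section LeafEdges

variable [Fintype V]

lemma leaf_unique_nbr {i a b : V} (hi : IsLeaf G i) (ha : G.Adj i a) (hb : G.Adj i b) :
    a = b := by
  obtain ⟨w, _, hun⟩ := hi
  rw [hun a ha, hun b hb]

lemma leafEdges_in_path {i j : V} (hi : IsLeaf G i) (hj : IsLeaf G j) (hij : i ≠ j)
    (e : Sym2 V) : (e ∈ leafEdges G ∧ e ∈ (pa hG i j).edges) ↔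
      (e = s(i, dirv hG i j) ∨ e = s(j, dirv hG j i)) := by
  constructor
  · rintro ⟨⟨heE, l, hle, hl⟩, hep⟩
    obtain ⟨m, rfl⟩ : ∃ m, e = s(l, m) := ⟨Sym2.Mem.other hle, (Sym2.other_spec hle).symm⟩
    have hadj : G.Adj l m := (SimpleGraph.mem_edgeSet G).1 heE
    have hls : l ∈ (pa hG i j).support := Walk.fst_mem_support_of_mem_edges _ hep
    have hcases : l = i ∨ l = j := by
      by_contra hc
      push_neg at hc
      obtain ⟨hdne, _, _⟩ := internal_dirs hG hls hc.1 hc.2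
      exact hdne (leaf_unique_nbr hl (adj_dirv hG hc.1) (adj_dirv hG hc.2))
    rcases hcases with rfl | rfl
    · left
      rw [leaf_unique_nbr hl hadj (adj_dirv hG hij)]
    · right
      rw [leaf_unique_nbr hl hadj (adj_dirv hG (Ne.symm hij))]
  · rintro (rfl | rfl)
    · refine ⟨⟨(pa hG i j).edges_subset_edgeSet (first_edge_mem hG hij), i, ?_, hi⟩,
        first_edge_mem hG hij⟩
      exact Sym2.mem_mk_left _ _
    · refine ⟨⟨(pa hG j i).edges_subset_edgeSet (first_edge_mem hG (Ne.symm hij)), j, ?_, hj⟩,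
        mem_edges_pa_symm hG (first_edge_mem hG (Ne.symm hij))⟩
      exact Sym2.mem_mk_left _ _

lemma canonical_ne {i j : V} (hcard : 2 < Fintype.card V) (hi : IsLeaf G i)
    (hj : IsLeaf G j) (hij : i ≠ j) : s(i, dirv hG i j) ≠ s(j, dirv hG j i) := by
  intro h
  rw [Sym2.eq_iff] at h
  rcases h with ⟨h1, _⟩ | ⟨h1, h2⟩
  · exact hij h1
  have hadj : G.Adj i j := by
    have := adj_dirv hG hij
    rwa [h2] at this
  have hstep : ∀ a b, a ∈ ({i, j} : Set V) → G.Adj a b → b ∈ ({i, j} : Set V) := by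
    rintro a b (rfl | rfl) hab
    · right
      exact leaf_unique_nbr hi hab hadj
    · left
      exact leaf_unique_nbr hj hab hadj.symm
  have hall : ∀ w : V, w ∈ ({i, j} : Set V) := by
    intro w
    have hwalk : ∀ (a : V) (p : G.Walk a w), a ∈ ({i, j} : Set V) → w ∈ ({i, j} : Set V) := by
      intro a p
      induction p with
      | nil => exact id
      | cons hadj' q ih => intro ha; exact ih (hstep _ _ ha hadj')
    exact hwalk i (pa hG i w) (Or.inl rfl)
  have hsub : (Finset.univ : Finset V) ⊆ {i, j} := by
    intro w _
    have := hall w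
    simpa using this
  have hle := Finset.card_le_card hsub
  have h2' : ({i, j} : Finset V).card ≤ 2 := Finset.card_insert_le _ _ |>.trans (by simp)
  rw [Finset.card_univ] at hle
  omega

lemma sum_leafEdges {i j : V} (hcard : 2 < Fintype.card V) (hi : IsLeaf G i)
    (hj : IsLeaf G j) (hij : i ≠ j) :
    ∑ e ∈ (leafEdges G).toFinset, W hG i j e = (2 : ℝ) := by
  classical
  have hW : ∀ e, W hG i j e = if e ∈ (pa hG i j).edges then (1 : ℝ) else 0 := fun e => rfl
  simp only [hW]
  rw [Finset.sum_boole]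
  have hfil : (leafEdges G).toFinset.filter (· ∈ (pa hG i j).edges) =
      {s(i, dirv hG i j), s(j, dirv hG j i)} := by
    ext e
    rw [Finset.mem_filter, Set.mem_toFinset, Finset.mem_insert, Finset.mem_singleton]
    exact leafEdges_in_path hG hi hj hij e
  rw [hfil, Finset.card_insert_of_notMem (by
      simpa using canonical_ne hG hcard hi hj hij), Finset.card_singleton]
  norm_num

end LeafEdges

/-- The constraint submodule: supported on edges and constant across degree-2 vertices. -/
def Uc (G : SimpleGraph V) : Submodule ℝ (Sym2 V → ℝ) where
  carrier := {x | (∀ e ∉ G.edgeSet, x e = 0) ∧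
    ∀ u v w : V, (G.neighborSet u).ncard = 2 → G.Adj u v → G.Adj u w → x s(u, v) = x s(u, w)}
  add_mem' := by
    rintro a b ⟨ha1, ha2⟩ ⟨hb1, hb2⟩
    constructor
    · intro e he
      simp only [Pi.add_apply, ha1 e he, hb1 e he, add_zero]
    · intro u v w h2 hv hw
      simp only [Pi.add_apply, ha2 u v w h2 hv hw, hb2 u v w h2 hv hw]
  zero_mem' := ⟨fun _ _ => rfl, fun _ _ _ _ _ _ => rfl⟩
  smul_mem' := by
    rintro c a ⟨ha1, ha2⟩
    constructor
    · intro e he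
      simp only [Pi.smul_apply, ha1 e he, smul_zero]
    · intro u v w h2 hv hw
      simp only [Pi.smul_apply, ha2 u v w h2 hv hw]

lemma S_subset_Uc [Fintype V] {G : SimpleGraph V} (hG : G.IsTree) :
    {x : Sym2 V → ℝ | ∃ i j : V, i ≠ j ∧ IsLeaf G i ∧ IsLeaf G j ∧ x = pathVec G i j}
      ⊆ ↑(Uc G) := by
  rintro x ⟨i, j, hij, hi, hj, rfl⟩
  rw [pathVec_eq_W hG]
  constructor
  · intro e he
    simp only [W]
    rw [if_neg]
    intro hmem
    exact he ((pa hG i j).edges_subset_edgeSet hmem)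
  · intro u v w h2 hv hw
    exact W_deg2 hG hi hj h2 hv hw

lemma Uc_ker [Fintype V] {G : SimpleGraph V} (hG : G.IsTree) {r : V} (hr : IsLeaf G r)
    {x : Sym2 V → ℝ} (hx : x ∈ Uc G)
    (hR : ∀ e ∈ {e : Sym2 V | ∃ v, v ≠ r ∧ e = up hG r v ∧
       (G.neighborSet (dirv hG v r)).ncard ≠ 2}, x e = 0) : x = 0 := by
  obtain ⟨hx1, hx2⟩ := hx
  have hrdeg := (isLeaf_iff_ncard).1 hr
  have key : ∀ n : ℕ, ∀ v : V, v ≠ r → dep hG r v ≤ n → x (up hG r v) = 0 := by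
    intro n
    induction n with
    | zero =>
      intro v hv hd
      exfalso
      have hnil : (pa hG v r).Nil := Walk.nil_iff_length_eq.2 (Nat.le_zero.1 hd)
      exact hv hnil.eq
    | succ n IH =>
      intro v hv hd
      by_cases hdeg : (G.neighborSet (dirv hG v r)).ncard = 2
      · have hur : dirv hG v r ≠ r := by
          intro h
          rw [h, hrdeg] at hdeg
          omega
        have hcon := hx2 (dirv hG v r) v (dirv hG (dirv hG v r) r) hdeg
          (adj_dirv hG hv).symm (adj_dirv hG hur)
        have hswap : up hG r v = s(dirv hG v r, v) := by rw [up, Sym2.eq_swap]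
        rw [hswap, hcon]
        have hdp := dep_par hG r hv
        exact IH (dirv hG v r) hur (by omega)
      · exact hR _ ⟨v, hv, rfl, hdeg⟩
  funext e
  by_cases he : e ∈ G.edgeSet
  · obtain ⟨v, hv, rfl⟩ := edge_eq_up hG r he
    exact key (dep hG r v) v hv le_rfl
  · exact hx1 e he

end TreeLemmas

/-- For a tree with more than 2 vertices,
`dim P_T = |E| − |{u : deg(u) = 2}| − 1`. -/
theorem pathPolytope_dim [Fintype V] (G : SimpleGraph V)
    (hG : G.IsTree) (hcard : 2 < Fintype.card V) :
    polyDim (pathPolytope G) + Set.ncard {u : V | (G.neighborSet u).ncard = 2} + 1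
      = G.edgeSet.ncard := by
  classical
  obtain ⟨v0, w0, hvw0⟩ : ∃ v w : V, G.Adj v w := by
    obtain ⟨v, w, hvw⟩ := Fintype.exists_pair_of_one_lt_card (α := V) (by omega)
    exact ⟨v, dirv hG v w, adj_dirv hG hvw⟩
  obtain ⟨r, hr, -, -⟩ := leaf_dir hG hvw0
  set S := {x : Sym2 V → ℝ | ∃ i j : V, i ≠ j ∧ IsLeaf G i ∧ IsLeaf G j ∧ x = pathVec G i j}
    with hSdef
  set Rs := {e : Sym2 V | ∃ v, v ≠ r ∧ e = up hG r v ∧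
    (G.neighborSet (dirv hG v r)).ncard ≠ 2} with hRdef
  set M := Submodule.span ℝ S with hMdef
  set Φ : (Sym2 V → ℝ) →ₗ[ℝ] (↥Rs → ℝ) :=
    LinearMap.funLeft ℝ ℝ (fun e : ↥Rs => (e : Sym2 V)) with hPhidef
  have hMU : M ≤ Uc G := Submodule.span_le.2 (S_subset_Uc hG)
  have hinj : ∀ x ∈ M, Φ x = 0 → x = 0 := by
    intro x hx h0
    refine Uc_ker hG hr (hMU hx) ?_
    intro e he
    exact congrFun h0 ⟨e, he⟩
  have hsurj : ∀ e0 : ↥Rs, ∃ x, x ∈ M ∧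
      Φ x = fun j : ↥Rs => if e0 = j then (1 : ℝ) else 0 := by
    intro e0
    obtain ⟨v, hv, hev, hdeg⟩ := e0.2
    refine ⟨W hG (dirv hG v r) (bot hG r v), ?_, ?_⟩
    · rw [hMdef, hSdef]
      exact chain_mem_span hG r hv hdeg
    · funext j
      have hPhiApp : Φ (W hG (dirv hG v r) (bot hG r v)) j
          = W hG (dirv hG v r) (bot hG r v) (j : Sym2 V) := rfl
      rw [hPhiApp]
      by_cases hje : e0 = j
      · rw [if_pos hje]
        have hjv : (j : Sym2 V) = up hG r v := by rw [← hje, hev]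
        obtain ⟨hadj, hB⟩ := (bot_props hG r hv).2.2.2.1
        have hupmem : up hG r v ∈ (pa hG (dirv hG v r) (bot hG r v)).edges := by
          have hswap : up hG r v = s(dirv hG v r, v) := by rw [up, Sym2.eq_swap]
          rw [hswap, hB, Walk.edges_cons]
          exact List.mem_cons_self
        simp only [W, hjv, if_pos hupmem]
      · rw [if_neg hje]
        obtain ⟨w, hw, hjw, hdegw⟩ := j.2
        have hnot : (j : Sym2 V) ∉ (pa hG (dirv hG v r) (bot hG r v)).edges := by
          intro hmem
          rw [hjw] at hmem
          rcases (bot_props hG r hv).2.2.2.2 _ hmem with heq | ⟨w', hw', heq, hdeg'⟩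
          · exact hje (Subtype.ext (by rw [hev, hjw, heq]))
          · have hww := up_inj hG r hw hw' heq
            rw [hww] at hdegw
            exact hdegw hdeg'
        simp only [W, if_neg hnot]
  set f := Φ.comp M.subtype with hfdef
  have hfinj : Function.Injective f := by
    rw [← LinearMap.ker_eq_bot, eq_bot_iff]
    rintro ⟨x, hx⟩ hker
    rw [LinearMap.mem_ker] at hker
    have hx0 : x = 0 := hinj x hx hker
    simpa [Submodule.mem_bot, Subtype.ext_iff] using hx0
  have hfsurj : Function.Surjective f := by
    intro y
    choose g hg1 hg2 using hsurj
    refine ⟨⟨∑ i : ↥Rs, y i • g i,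
      Submodule.sum_mem _ fun i _ => Submodule.smul_mem _ _ (hg1 i)⟩, ?_⟩
    show Φ (∑ i : ↥Rs, y i • g i) = y
    rw [map_sum]
    conv_rhs => rw [pi_eq_sum_univ y]
    exact Finset.sum_congr rfl fun i _ => by rw [map_smul, hg2 i]
  have hrank1 : Module.finrank ℝ M = Rs.ncard := by
    have he := LinearEquiv.ofBijective f ⟨hfinj, hfsurj⟩
    rw [he.finrank_eq, Module.finrank_fintype_fun_eq_card, ← Nat.card_eq_fintype_card,
      Nat.card_coe_set_eq]
  have hA : polyDim (pathPolytope G) = Module.finrank ℝ (vectorSpan ℝ S) := by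
    rw [polyDim, pathPolytope, ← hSdef, affineSpan_convexHull, direction_affineSpan]
  set L : (Sym2 V → ℝ) →ₗ[ℝ] ℝ := ∑ e ∈ (leafEdges G).toFinset, LinearMap.proj e with hLdef
  have hLapp : ∀ x : Sym2 V → ℝ, L x = ∑ e ∈ (leafEdges G).toFinset, x e := by
    intro x
    rw [hLdef]
    simp [LinearMap.sum_apply, LinearMap.proj_apply]
  have hL2 : ∀ s ∈ S, L s = 2 := by
    rintro s ⟨i, j, hij, hi, hj, rfl⟩
    rw [hLapp, pathVec_eq_W hG]
    exact sum_leafEdges hG hcard hi hj hij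
  obtain ⟨rn, hrn, -⟩ := id hr
  obtain ⟨a0, hla0, ha0r, -⟩ := leaf_dir hG hrn
  set s0 := pathVec G r a0 with hs0def
  have hs0S : s0 ∈ S := ⟨r, a0, Ne.symm ha0r, hr, hla0, rfl⟩
  have hVS0 : vectorSpan ℝ S ≤ LinearMap.ker L := by
    rw [vectorSpan_def, Submodule.span_le]
    rintro x ⟨a, ha, b, hb, rfl⟩
    show L (a - b) = 0
    rw [map_sub, hL2 a ha, hL2 b hb, sub_self]
  have hs0ne : s0 ≠ 0 := by
    intro h
    have h2 := hL2 s0 hs0S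
    rw [h, map_zero] at h2
    norm_num at h2
  have hsup : M = vectorSpan ℝ S ⊔ (ℝ ∙ s0) := by
    apply le_antisymm
    · rw [hMdef, Submodule.span_le]
      intro s hs
      have hdecomp : s = (s - s0) + s0 := (sub_add_cancel s s0).symm
      rw [SetLike.mem_coe, hdecomp]
      refine Submodule.add_mem _ (Submodule.mem_sup_left ?_)
        (Submodule.mem_sup_right (Submodule.mem_span_singleton_self s0))
      have hv := vsub_mem_vectorSpan ℝ hs hs0S
      rwa [vsub_eq_sub] at hv
    · apply sup_le
      · rw [vectorSpan_def, Submodule.span_le]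
        rintro x ⟨a, ha, b, hb, rfl⟩
        show a - b ∈ M
        exact Submodule.sub_mem _ (Submodule.subset_span ha) (Submodule.subset_span hb)
      · rw [Submodule.span_singleton_le_iff_mem]
        exact Submodule.subset_span hs0S
  have hinf : vectorSpan ℝ S ⊓ (ℝ ∙ s0) = ⊥ := by
    rw [eq_bot_iff]
    intro x hx
    obtain ⟨hx1, hx2⟩ := Submodule.mem_inf.1 hx
    obtain ⟨c, rfl⟩ := Submodule.mem_span_singleton.1 hx2
    have h0 := hVS0 hx1
    rw [LinearMap.mem_ker, map_smul, hL2 s0 hs0S, smul_eq_mul] at h0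
    have hc : c = 0 := by linarith
    rw [Submodule.mem_bot, hc, zero_smul]
  have hrank2 : Module.finrank ℝ M = Module.finrank ℝ (vectorSpan ℝ S) + 1 := by
    have hkey := Submodule.finrank_sup_add_finrank_inf_eq (vectorSpan ℝ S) (ℝ ∙ s0)
    rw [hinf, finrank_bot, finrank_span_singleton hs0ne] at hkey
    rw [hsup]
    omega
  have hcount := card_R_add_card_V2 hG r hr
  rw [← hRdef] at hcount
  rw [hA]
  omega
end
end

section
/- Let T' be a tree, e_1 a leaf edge of T', and let S_2 be the path with 2 edges (star tree with internal vertex of degree 2), with e_2 one of its edges. If T = T' *_{e_1,e_2} S_2 (i.e., T is obtained from T' by subdividing the edge e_1 into two edges), then P_T is affinely isomorphic to P_{T'}. -/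
open Classical SimpleGraph

noncomputable section

variable {V : Type*}

/-- The tree obtained from `G'` by subdividing the edge `{u,k}`: a new vertex `none` is
placed in the middle of the edge, which is replaced by the two edges `{u,none}`, `{none,k}`. -/
def subdiv (G' : SimpleGraph V) (u k : V) : SimpleGraph (Option V) where
  Adj a b := match a, b with
    | some x, some y => G'.Adj x y ∧ ¬(x = u ∧ y = k) ∧ ¬(x = k ∧ y = u)
    | some x, none => x = u ∨ x = k
    | none, some y => y = u ∨ y = k
    | none, none => False
  symm := by
    refine ⟨?_⟩
    rintro (x | x) (y | y) h
    · exact h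
    · exact h
    · exact h
    · exact ⟨h.1.symm, fun hc => h.2.2 ⟨hc.2, hc.1⟩, fun hc => h.2.1 ⟨hc.2, hc.1⟩⟩
  loopless := by
    refine ⟨?_⟩
    rintro (x | x) h
    · exact h
    · exact G'.irrefl h.1

attribute [local instance] Classical.propDecidable

namespace Subdivision

variable {G' : SimpleGraph V} {u k : V}

lemma adj_ss {x y : V} : (subdiv G' u k).Adj (some x) (some y) ↔
    G'.Adj x y ∧ ¬(x = u ∧ y = k) ∧ ¬(x = k ∧ y = u) := Iff.rfl

lemma adj_sn {x : V} : (subdiv G' u k).Adj (some x) none ↔ x = u ∨ x = k := Iff.rfl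

lemma adj_ns {y : V} : (subdiv G' u k).Adj none (some y) ↔ y = u ∨ y = k := Iff.rfl

lemma adj_nn : ¬ (subdiv G' u k).Adj none none := fun h => h

/-- the coordinate of the original tree that a coordinate of the subdivision reads from -/
def coordMap (u k : V) : Sym2 (Option V) → Option (Sym2 V) :=
  Sym2.lift ⟨fun a b => match a, b with
    | some x, some y => if s(x,y) = s(u,k) then none else some s(x,y)
    | some x, none => if x = u ∨ x = k then some s(u,k) else none
    | none, some y => if y = u ∨ y = k then some s(u,k) else none
    | none, none => none, by
      rintro (x|x) (y|y) <;> simp [Sym2.eq_swap, or_comm]⟩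

lemma coordMap_ss (x y : V) :
    coordMap u k s(some x, some y) = if s(x,y) = s(u,k) then none else some s(x,y) := by
  simp [coordMap]

lemma coordMap_sn (x : V) :
    coordMap u k s(some x, none) = if x = u ∨ x = k then some s(u,k) else none := by
  simp [coordMap]

lemma coordMap_nn : coordMap u k s((none : Option V), none) = none := by
  simp [coordMap]

def phi0 (u k : V) : (Sym2 V → ℝ) →ₗ[ℝ] (Sym2 (Option V) → ℝ) where
  toFun x e' := (coordMap u k e').elim 0 x
  map_add' x y := funext fun e' => by rcases h : coordMap u k e' <;> simp [h]
  map_smul' c x := funext fun e' => by rcases h : coordMap u k e' <;> simp [h]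

lemma phi0_injective : Function.Injective (phi0 (V := V) u k) := by
  have hne : u ≠ k → True := fun _ => trivial
  intro x y hxy
  funext e
  induction e using Sym2.ind with
  | _ a b =>
    by_cases hab : s(a,b) = s(u,k)
    · have := congrFun hxy s(some u, none)
      simpa [phi0, coordMap_sn, hab] using this
    · have := congrFun hxy s(some a, some b)
      simpa [phi0, coordMap_ss, hab] using this


section UpDef
variable {G' : SimpleGraph V} {u k : V}

def up (huk : G'.Adj u k) : ∀ {a b : V}, G'.Walk a b → (subdiv G' u k).Walk (some a) (some b)
  | _, _, Walk.nil => Walk.nil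
  | _, _, @Walk.cons _ _ x y _ h p =>
    if hxy : (x = u ∧ y = k) ∨ (x = k ∧ y = u) then
      Walk.cons (show (subdiv G' u k).Adj (some x) none from hxy.imp And.left And.left)
        (Walk.cons (show (subdiv G' u k).Adj none (some y) from
          hxy.elim (fun h' => Or.inr h'.2) (fun h' => Or.inl h'.2)) (up huk p))
    else
      Walk.cons (show (subdiv G' u k).Adj (some x) (some y) from
        ⟨h, fun hc => hxy (Or.inl hc), fun hc => hxy (Or.inr hc)⟩) (up huk p)

variable (huk : G'.Adj u k)

lemma up_nil {a : V} : up huk (Walk.nil : G'.Walk a a) = Walk.nil := rfl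

lemma up_cons_uk {x y b : V} (h : G'.Adj x y) (p : G'.Walk y b)
    (hxy : (x = u ∧ y = k) ∨ (x = k ∧ y = u)) :
    up huk (Walk.cons h p) =
      Walk.cons (show (subdiv G' u k).Adj (some x) none from hxy.imp And.left And.left)
        (Walk.cons (show (subdiv G' u k).Adj none (some y) from
          hxy.elim (fun h' => Or.inr h'.2) (fun h' => Or.inl h'.2)) (up huk p)) := by
  rw [up, dif_pos hxy]

lemma up_cons {x y b : V} (h : G'.Adj x y) (p : G'.Walk y b)
    (hxy : ¬ ((x = u ∧ y = k) ∨ (x = k ∧ y = u))) :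
    up huk (Walk.cons h p) =
      Walk.cons (adj_ss.mpr ⟨h, fun hc => hxy (Or.inl hc), fun hc => hxy (Or.inr hc)⟩ :
        (subdiv G' u k).Adj (some x) (some y)) (up huk p) := by
  rw [up, dif_neg hxy]

end UpDef

section UpLemmas
variable {G' : SimpleGraph V} {u k : V} (huk : G'.Adj u k)

lemma up_support_some {a b : V} (p : G'.Walk a b) (z : V) :
    some z ∈ (up huk p).support ↔ z ∈ p.support := by
  induction p with
  | nil => simp [up_nil]
  | @cons x y b h p ih =>
    by_cases hxy : (x = u ∧ y = k) ∨ (x = k ∧ y = u)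
    · rw [up_cons_uk huk h p hxy]; simp [ih]
    · rw [up_cons huk h p hxy]; simp [ih]

lemma up_support_none {a b : V} (p : G'.Walk a b) :
    none ∈ (up huk p).support ↔ s(u,k) ∈ p.edges := by
  induction p with
  | nil => simp [up_nil]
  | @cons x y b h p ih =>
    by_cases hxy : (x = u ∧ y = k) ∨ (x = k ∧ y = u)
    · rw [up_cons_uk huk h p hxy]
      have hxy' : s(x,y) = s(u,k) := Sym2.eq_iff.mpr hxy
      simp [← hxy']
    · rw [up_cons huk h p hxy]
      have hne : s(u,k) ≠ s(x,y) := fun hh => hxy (Sym2.eq_iff.mp hh.symm)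
      simp [ih, hne]

lemma up_edges_some {a b : V} (p : G'.Walk a b) {c d : V} (hcd : s(c,d) ≠ s(u,k)) :
    s(some c, some d) ∈ (up huk p).edges ↔ s(c,d) ∈ p.edges := by
  induction p with
  | nil => simp [up_nil]
  | @cons x y b h p ih =>
    by_cases hxy : (x = u ∧ y = k) ∨ (x = k ∧ y = u)
    · rw [up_cons_uk huk h p hxy]
      have hxy' : s(x,y) = s(u,k) := Sym2.eq_iff.mpr hxy
      have hne : s(c,d) ≠ s(x,y) := fun hh => hcd (hh.trans hxy')
      rw [Walk.edges_cons, Walk.edges_cons, Walk.edges_cons,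
        List.mem_cons, List.mem_cons, List.mem_cons]
      have h1 : s(some c, some d) ≠ s(some x, none) := by simp [Sym2.eq_iff]
      have h2 : s(some c, some d) ≠ s(none, some y) := by simp [Sym2.eq_iff]
      simp [h1, h2, ih, hne]
    · rw [up_cons huk h p hxy]
      have key : s(some c, some d) = s(some x, some y) ↔ s(c,d) = s(x,y) := by
        simp [Sym2.eq_iff]
      simp [ih, key]

lemma up_edges_none {a b : V} (p : G'.Walk a b) (c : V) :
    s(some c, none) ∈ (up huk p).edges ↔ (c = u ∨ c = k) ∧ s(u,k) ∈ p.edges := by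
  induction p with
  | nil => simp [up_nil]
  | @cons x y b h p ih =>
    by_cases hxy : (x = u ∧ y = k) ∨ (x = k ∧ y = u)
    · rw [up_cons_uk huk h p hxy]
      have hxy' : s(x,y) = s(u,k) := Sym2.eq_iff.mpr hxy
      rw [Walk.edges_cons, Walk.edges_cons, Walk.edges_cons,
        List.mem_cons, List.mem_cons, List.mem_cons]
      have h1 : s(some c, none) = s(some x, none) ↔ c = x := by simp [Sym2.eq_iff]
      have h2 : s(some c, none) = s(none, some y) ↔ c = y := by
        rw [Sym2.eq_swap (a := (none : Option V))]; simp [Sym2.eq_iff]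
      rw [h1, h2, ih, ← hxy']
      constructor
      · rintro (rfl | rfl | hcp)
        · exact ⟨hxy.imp And.left And.left, Or.inl rfl⟩
        · exact ⟨hxy.elim (fun h' => Or.inr h'.2) (fun h' => Or.inl h'.2), Or.inl rfl⟩
        · exact ⟨hcp.1, Or.inr hcp.2⟩
      · rintro ⟨hc, _⟩
        rcases hxy with ⟨rfl, rfl⟩ | ⟨rfl, rfl⟩
        · exact hc.imp id Or.inl
        · exact hc.symm.imp id Or.inl
    · rw [up_cons huk h p hxy]
      have hne : s(u,k) ≠ s(x,y) := fun hh => hxy (Sym2.eq_iff.mp hh.symm)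
      have h1 : s(some c, none) ≠ s(some x, some y) := by simp [Sym2.eq_iff]
      simp [ih, hne, h1]

lemma up_isPath {a b : V} (p : G'.Walk a b) (hp : p.IsPath) : (up huk p).IsPath := by
  induction p with
  | nil => exact Walk.IsPath.nil
  | @cons x y b h p ih =>
    rw [Walk.cons_isPath_iff] at hp
    by_cases hxy : (x = u ∧ y = k) ∨ (x = k ∧ y = u)
    · rw [up_cons_uk huk h p hxy]
      have hukp : s(u,k) ∉ p.edges := by
        intro hmem
        rcases hxy with ⟨rfl, rfl⟩ | ⟨rfl, rfl⟩
        · exact hp.2 (Walk.fst_mem_support_of_mem_edges p hmem)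
        · exact hp.2 (Walk.snd_mem_support_of_mem_edges p hmem)
      rw [Walk.cons_isPath_iff, Walk.cons_isPath_iff]
      refine ⟨⟨ih hp.1, ?_⟩, ?_⟩
      · rw [up_support_none huk p]; exact hukp
      · rw [Walk.support_cons, List.mem_cons]
        push_neg
        exact ⟨fun hh => by simp at hh, fun hh => hp.2 ((up_support_some huk p x).mp hh)⟩
    · rw [up_cons huk h p hxy, Walk.cons_isPath_iff]
      exact ⟨ih hp.1, fun hh => hp.2 ((up_support_some huk p x).mp hh)⟩

end UpLemmas

section DownDef
variable {G' : SimpleGraph V} {u k : V}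

def down (huk : G'.Adj u k) :
    ∀ {a b : Option V}, (subdiv G' u k).Walk a b → G'.Walk (a.getD k) (b.getD k)
  | _, _, Walk.nil => Walk.nil
  | _, _, @Walk.cons _ _ (some x) (some _) _ h p => Walk.cons h.1 (down huk p)
  | _, _, @Walk.cons _ _ (some x) none _ h p =>
      if hx : x = u then (Walk.cons huk (down huk p)).copy hx.symm rfl
      else (down huk p).copy ((h : x = u ∨ x = k).resolve_left hx).symm rfl
  | _, _, @Walk.cons _ _ none (some y) _ h p =>
      if hy : y = u then Walk.cons huk.symm ((down huk p).copy hy rfl)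
      else (down huk p).copy ((h : y = u ∨ y = k).resolve_left hy) rfl
  | _, _, @Walk.cons _ _ none none _ h _ => (adj_nn h).elim

variable (huk : G'.Adj u k)

lemma down_nil {a : Option V} :
    down huk (Walk.nil : (subdiv G' u k).Walk a a) = Walk.nil := by
  cases a <;> rfl

lemma down_cons_ss {x y : V} {b : Option V} (h : (subdiv G' u k).Adj (some x) (some y))
    (p : (subdiv G' u k).Walk (some y) b) :
    down huk (Walk.cons h p) = Walk.cons h.1 (down huk p) := rfl

lemma down_cons_un {b : Option V} (h : (subdiv G' u k).Adj (some u) none)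
    (p : (subdiv G' u k).Walk none b) :
    down huk (Walk.cons h p) = Walk.cons huk (down huk p) := by
  rw [down, dif_pos rfl, Walk.copy_rfl_rfl]

lemma down_cons_kn (huk' : u ≠ k) {b : Option V} (h : (subdiv G' u k).Adj (some k) none)
    (p : (subdiv G' u k).Walk none b) :
    down huk (Walk.cons h p) = down huk p := by
  rw [down, dif_neg (Ne.symm huk'), Walk.copy_rfl_rfl]

lemma down_cons_nu {b : Option V} (h : (subdiv G' u k).Adj none (some u))
    (p : (subdiv G' u k).Walk (some u) b) :
    down huk (Walk.cons h p) = Walk.cons huk.symm (down huk p) := by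
  rw [down, dif_pos rfl, Walk.copy_rfl_rfl]

lemma down_cons_nk (huk' : u ≠ k) {b : Option V} (h : (subdiv G' u k).Adj none (some k))
    (p : (subdiv G' u k).Walk (some k) b) :
    down huk (Walk.cons h p) = down huk p := by
  rw [down, dif_neg (Ne.symm huk'), Walk.copy_rfl_rfl]

end DownDef

section DownLemmas
variable {G' : SimpleGraph V} {u k : V} (huk : G'.Adj u k)

lemma down_support {a b : Option V} (q : (subdiv G' u k).Walk a b) (z : V) :
    z ∈ (down huk q).support ↔ (some z ∈ q.support ∨ (z = k ∧ none ∈ q.support)) := by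
  induction q with
  | nil =>
    rename_i w
    cases w <;> simp [down_nil]
  | @cons a c b h p ih =>
    cases a with
    | some x =>
      cases c with
      | some y =>
        rw [down_cons_ss]
        simp only [Walk.support_cons, List.mem_cons, ih, Option.getD_some, Option.some.injEq]
        tauto
      | none =>
        rcases adj_sn.mp h with hx | hx
        · replace hx := hx.symm; subst hx
          rw [down_cons_un]
          have hstart : (none : Option V) ∈ p.support := p.start_mem_support
          simp only [Walk.support_cons, List.mem_cons, ih, Option.getD_some, Option.some.injEq,
            hstart]
          tauto
        · replace hx := hx.symm; subst hx
          rw [down_cons_kn huk huk.ne]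
          have hstart : (none : Option V) ∈ p.support := p.start_mem_support
          simp only [Walk.support_cons, List.mem_cons, ih, Option.getD_some, Option.some.injEq,
            hstart]
          tauto
    | none =>
      cases c with
      | some y =>
        rcases adj_ns.mp h with hy | hy
        · replace hy := hy.symm; subst hy
          rw [down_cons_nu]
          simp only [Walk.support_cons, List.mem_cons, ih, Option.getD_some, Option.some.injEq]
          tauto
        · replace hy := hy.symm; subst hy
          rw [down_cons_nk huk huk.ne, ih]
          have hstart : some k ∈ p.support := p.start_mem_support
          simp only [Walk.support_cons, List.mem_cons]
          constructor
          · rintro (hmem | ⟨hzk, hn⟩)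
            · exact Or.inl (Or.inr hmem)
            · exact Or.inr ⟨hzk, Or.inr hn⟩
          · rintro ((hh | hmem) | ⟨hzk, -⟩)
            · exact absurd hh (by simp)
            · exact Or.inl hmem
            · exact Or.inl (hzk ▸ hstart)
      | none => exact (adj_nn h).elim

lemma adj_some_k (huk : G'.Adj u k) (hk : IsLeaf G' k) {x : V} : ¬ (subdiv G' u k).Adj (some x) (some k) := by
  rintro ⟨h1, h2, _⟩
  obtain ⟨w₀, _, hun⟩ := hk
  exact h2 ⟨(hun x h1.symm).trans (hun u huk.symm).symm, rfl⟩

lemma none_mem_walk_to_k (huk : G'.Adj u k) (hk : IsLeaf G' k) :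
    ∀ {c : Option V} (w : (subdiv G' u k).Walk c (some k)), c ≠ some k → none ∈ w.support
  | none, w, _ => Walk.start_mem_support w
  | some _, Walk.nil, hc => absurd rfl hc
  | some x, @Walk.cons _ _ _ none _ h p, _ => by
      rw [Walk.support_cons, List.mem_cons]
      exact Or.inr (Walk.start_mem_support p)
  | some x, @Walk.cons _ _ _ (some y) _ h p, _ => by
      have hyk : y ≠ k := fun h' => adj_some_k huk hk (h' ▸ h)
      rw [Walk.support_cons, List.mem_cons]
      exact Or.inr (none_mem_walk_to_k huk hk p (fun hh => hyk (Option.some_injective _ hh)))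

lemma down_isPath (hk : IsLeaf G' k) {a b : Option V} (q : (subdiv G' u k).Walk a b)
    (hq : q.IsPath) : (down huk q).IsPath := by
  induction q with
  | nil => rw [down_nil]; exact Walk.IsPath.nil
  | @cons a c b h p ih =>
    rw [Walk.cons_isPath_iff] at hq
    cases a with
    | some x =>
      cases c with
      | some y =>
        rw [down_cons_ss, Walk.cons_isPath_iff]
        refine ⟨ih hq.1, ?_⟩
        simp only [Option.getD_some]
        rw [down_support huk]
        rintro (hmem | ⟨rfl, -⟩)
        · exact hq.2 hmem
        · exact adj_some_k huk hk h.symm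
      | none =>
        rcases adj_sn.mp h with hx | hx
        · replace hx := hx.symm; subst hx
          rw [down_cons_un, Walk.cons_isPath_iff]
          refine ⟨ih hq.1, ?_⟩
          simp only [Option.getD_some]
          rw [down_support huk]
          rintro (hmem | ⟨rfl, -⟩)
          · exact hq.2 hmem
          · exact huk.ne rfl
        · replace hx := hx.symm; subst hx
          rw [down_cons_kn huk huk.ne]; exact ih hq.1
    | none =>
      cases c with
      | some y =>
        rcases adj_ns.mp h with hy | hy
        · replace hy := hy.symm; subst hy
          rw [down_cons_nu, Walk.cons_isPath_iff]
          refine ⟨ih hq.1, ?_⟩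
          rw [down_support huk]
          rintro (hmem | ⟨-, hnone⟩)
          · obtain ⟨q₁, q₂, rfl⟩ := Walk.mem_support_iff_exists_append.mp hmem
            refine hq.2 ?_
            rw [Walk.mem_support_append_iff]
            exact Or.inl (none_mem_walk_to_k huk hk q₁
              (fun hh => huk.ne (Option.some_injective _ hh)))
          · exact hq.2 hnone
        · replace hy := hy.symm; subst hy
          rw [down_cons_nk huk huk.ne]; exact ih hq.1
      | none => exact (adj_nn h).elim

end DownLemmas

section UpDown
variable {G' : SimpleGraph V} {u k : V}

theorem up_down (huk : G'.Adj u k) :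
    ∀ {a b : V} (q : (subdiv G' u k).Walk (some a) (some b)), q.IsPath →
      up huk (down huk q) = q
  | _, _, Walk.nil, _ => rfl
  | _, _, @Walk.cons _ _ (some x) (some y) _ h p, hq => by
      rw [Walk.cons_isPath_iff] at hq
      have IH := up_down huk p hq.1
      have hxy : ¬ ((x = u ∧ y = k) ∨ (x = k ∧ y = u)) := fun hc => hc.elim h.2.1 h.2.2
      rw [down_cons_ss huk h p, up_cons huk h.1 (down huk p) hxy, IH]
  | _, _, @Walk.cons _ _ (some x) none _ h (@Walk.cons _ _ _ (some z) _ h₂ p₂), hq => by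
      rw [Walk.cons_isPath_iff] at hq
      obtain ⟨hq1, hx_not⟩ := hq
      rw [Walk.cons_isPath_iff] at hq1
      obtain ⟨hp2, hnone_not⟩ := hq1
      have IH := up_down huk p₂ hp2
      have hxz : x ≠ z := by
        rintro rfl
        exact hx_not (by rw [Walk.support_cons]; exact List.mem_cons_of_mem _ p₂.start_mem_support)
      rcases adj_sn.mp h with hx | hx <;> rcases adj_ns.mp h₂ with hz | hz
      · exact absurd (hx.trans hz.symm) hxz
      · replace hx := hx.symm; subst hx
        replace hz := hz.symm; subst hz
        rw [down_cons_un huk, down_cons_nk huk huk.ne,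
          up_cons_uk huk huk (down huk p₂) (Or.inl ⟨rfl, rfl⟩), IH]
      · replace hx := hx.symm; subst hx
        replace hz := hz.symm; subst hz
        rw [down_cons_kn huk huk.ne, down_cons_nu huk,
          up_cons_uk huk huk.symm (down huk p₂) (Or.inr ⟨rfl, rfl⟩), IH]
      · exact absurd (hx.trans hz.symm) hxz
  | _, _, @Walk.cons _ _ (some x) none _ h (@Walk.cons _ _ _ none _ h₂ _), _ => (adj_nn h₂).elim

end UpDown

section Main
variable {G' : SimpleGraph V} {u k : V}

lemma phi0_apply (x : Sym2 V → ℝ) (e' : Sym2 (Option V)) :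
    phi0 u k x e' = (coordMap u k e').elim 0 x := rfl

lemma phi0_pathVec (hG' : G'.IsTree) (hk : IsLeaf G' k) (huk : G'.Adj u k) (i j : V) :
    phi0 u k (pathVec G' i j) = pathVec (subdiv G' u k) (some i) (some j) := by
  obtain ⟨p₀, hp₀, hup₀⟩ := hG'.existsUnique_path i j
  have hon : ∀ e, onPath G' i j e ↔ e ∈ p₀.edges := by
    intro e
    constructor
    · rintro ⟨q, hq, he⟩
      rwa [hup₀ q hq] at he
    · intro he
      exact ⟨p₀, hp₀, he⟩
  have hon' : ∀ e', onPath (subdiv G' u k) (some i) (some j) e' ↔ e' ∈ (up huk p₀).edges := by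
    intro e'
    constructor
    · rintro ⟨q, hq, he⟩
      have hdq : down huk q = p₀ := hup₀ _ (down_isPath huk hk q hq)
      rw [← up_down huk q hq, hdq] at he
      exact he
    · intro he
      exact ⟨up huk p₀, up_isPath huk p₀ hp₀, he⟩
  have key_sn : ∀ c : V, phi0 u k (pathVec G' i j) s(some c, none) =
      pathVec (subdiv G' u k) (some i) (some j) s(some c, none) := by
    intro c
    rw [phi0_apply, coordMap_sn]
    by_cases hc : c = u ∨ c = k
    · rw [if_pos hc]
      have hiff : onPath (subdiv G' u k) (some i) (some j) s(some c, none) ↔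
          onPath G' i j s(u,k) := by
        rw [hon', hon, up_edges_none huk p₀ c]
        simp [hc]
      simp only [Option.elim, pathVec, hiff]
    · rw [if_neg hc]
      have hno : ¬ onPath (subdiv G' u k) (some i) (some j) s(some c, none) := by
        rw [hon', up_edges_none huk p₀ c]
        rintro ⟨hcc, -⟩
        exact hc hcc
      simp [pathVec, hno]
  funext e'
  induction e' using Sym2.ind with
  | _ α β =>
    cases α with
    | some c =>
      cases β with
      | some d =>
        rw [phi0_apply, coordMap_ss]
        by_cases hcd : s(c,d) = s(u,k)
        · rw [if_pos hcd]
          have hno : ¬ onPath (subdiv G' u k) (some i) (some j) s(some c, some d) := by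
            rintro ⟨q, hq, he⟩
            have hadj := q.adj_of_mem_edges he
            rcases Sym2.eq_iff.mp hcd with ⟨rfl, rfl⟩ | ⟨rfl, rfl⟩
            · exact hadj.2.1 ⟨rfl, rfl⟩
            · exact hadj.2.2 ⟨rfl, rfl⟩
          simp [pathVec, hno]
        · rw [if_neg hcd]
          have hiff : onPath (subdiv G' u k) (some i) (some j) s(some c, some d) ↔
              onPath G' i j s(c,d) := by
            rw [hon', hon, up_edges_some huk p₀ hcd]
          simp only [Option.elim, pathVec, hiff]
      | none => exact key_sn c
    | none =>
      cases β with
      | some d => rw [Sym2.eq_swap]; exact key_sn d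
      | none =>
        rw [phi0_apply, coordMap_nn]
        have hno : ¬ onPath (subdiv G' u k) (some i) (some j) s((none : Option V), none) := by
          rintro ⟨q, hq, he⟩
          exact adj_nn (q.adj_of_mem_edges he)
        simp [pathVec, hno]

lemma isLeaf_subdiv_iff (hk : IsLeaf G' k) (huk : G'.Adj u k) (w : Option V) :
    IsLeaf (subdiv G' u k) w ↔ ∃ v, w = some v ∧ IsLeaf G' v := by
  cases w with
  | none =>
    apply iff_of_false
    · rintro ⟨w₀, hw₀, hun⟩
      have h1 : some u = w₀ := hun (some u) (Or.inl rfl)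
      have h2 : some k = w₀ := hun (some k) (Or.inr rfl)
      exact huk.ne (Option.some_injective _ (h1.trans h2.symm))
    · rintro ⟨v, hv, -⟩
      simp at hv
  | some x =>
    constructor
    · rintro ⟨w₀, hw₀, hun⟩
      refine ⟨x, rfl, ?_⟩
      by_cases hxk : x = k
      · exact hxk ▸ hk
      by_cases hxu : x = u
      · replace hxu := hxu.symm; subst hxu
        refine ⟨k, huk, fun y hy => ?_⟩
        by_cases hyk : y = k
        · exact hyk
        · have hadj : (subdiv G' u k).Adj (some u) (some y) :=
            ⟨hy, fun hc => hyk hc.2, fun hc => huk.ne hc.1⟩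
          have h1 := hun (some y) hadj
          have h2 := hun none (Or.inl rfl)
          exact absurd (h1.trans h2.symm) (by simp)
      · cases w₀ with
        | none => exact absurd (adj_sn.mp hw₀) (by tauto)
        | some y₀ =>
          refine ⟨y₀, hw₀.1, fun y hy => ?_⟩
          have hadj : (subdiv G' u k).Adj (some x) (some y) :=
            ⟨hy, fun hc => hxu hc.1, fun hc => hxk hc.1⟩
          exact Option.some_injective _ (hun (some y) hadj)
    · rintro ⟨v, hv, y₀, hy₀, hyun⟩
      obtain rfl : x = v := Option.some_injective _ hv
      by_cases hxk : x = k
      · replace hxk := hxk.symm; subst hxk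
        refine ⟨none, Or.inr rfl, fun w' hw' => ?_⟩
        cases w' with
        | none => rfl
        | some y => exact absurd hw'.symm (adj_some_k huk hk)
      by_cases hxu : x = u
      · replace hxu := hxu.symm; subst hxu
        have hy₀k : y₀ = k := (hyun k huk).symm
        refine ⟨none, Or.inl rfl, fun w' hw' => ?_⟩
        cases w' with
        | none => rfl
        | some y => exact absurd ⟨rfl, (hyun y hw'.1).trans hy₀k⟩ hw'.2.1
      · refine ⟨some y₀, ⟨hy₀, fun hc => hxu hc.1, fun hc => hxk hc.1⟩, fun w' hw' => ?_⟩
        cases w' with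
        | none => exact absurd (adj_sn.mp hw') (by tauto)
        | some y => exact congrArg some (hyun y hw'.1)

end Main

end Subdivision

/-- Subdividing a leaf edge `{u,k}` (i.e. gluing a path with two edges
onto it) yields a tree whose path polytope is affinely isomorphic to the original one. -/
theorem pathPolytope_subdivision [Fintype V] (G' : SimpleGraph V)
    (hG' : G'.IsTree) (u k : V) (hk : IsLeaf G' k) (huk : G'.Adj u k) :
    ∃ φ : (Sym2 V → ℝ) →ᵃ[ℝ] (Sym2 (Option V) → ℝ),
      Function.Injective φ ∧ φ '' pathPolytope G' = pathPolytope (subdiv G' u k) := by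
  refine ⟨(Subdivision.phi0 u k).toAffineMap, ?_, ?_⟩
  · rw [LinearMap.coe_toAffineMap]
    exact Subdivision.phi0_injective
  · rw [pathPolytope, pathPolytope, AffineMap.image_convexHull]
    congr 1
    ext y
    constructor
    · rintro ⟨x, ⟨i, j, hij, hi, hj, rfl⟩, rfl⟩
      refine ⟨some i, some j, by simpa using hij, ?_, ?_, ?_⟩
      · rw [Subdivision.isLeaf_subdiv_iff hk huk]; exact ⟨i, rfl, hi⟩
      · rw [Subdivision.isLeaf_subdiv_iff hk huk]; exact ⟨j, rfl, hj⟩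
      · rw [LinearMap.coe_toAffineMap]
        exact Subdivision.phi0_pathVec hG' hk huk i j
    · rintro ⟨i', j', hij', hi', hj', rfl⟩
      obtain ⟨i, rfl, hi⟩ := (Subdivision.isLeaf_subdiv_iff hk huk i').mp hi'
      obtain ⟨j, rfl, hj⟩ := (Subdivision.isLeaf_subdiv_iff hk huk j').mp hj'
      refine ⟨pathVec G' i j, ⟨i, j, fun hh => hij' (by rw [hh]), hi, hj, rfl⟩, ?_⟩
      rw [LinearMap.coe_toAffineMap]
      exact Subdivision.phi0_pathVec hG' hk huk i j
end
end
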